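/- arXiv:1201.0872 — 4 statements merged into one kernel-verified Lean document; each statement's English description precedes it below -/
import Mathlib

section
/- Let f : (0,∞)×(−∞,0] → [0,∞) be measurable with ∫₀^∞∫_{−∞}^0 f(x,y)² dx dy < ∞. Then for every n > 0, I₁(n,f) ≤ (37/8) ∫₀^∞∫_{−∞}^0 f(x,y)² dx dy. -/
open MeasureTheory ProbabilityTheory Filter Topology

noncomputable section

/-- The kernel `h(t,x,y) = ((t+y) ∧ 0 + x)₊ − (y ∧ 0 + x)₊`. -/
def hker (t x y : ℝ) : ℝ := max (min (t + y) 0 + x) 0 - max (min y 0 + x) 0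

/-- The kernel `g_s(t,x,y) = h(t+s,x,y) − h(s,x,y)`. -/
def gker (s t x y : ℝ) : ℝ := hker (t + s) x y - hker s x y

/-- The constant `C_H = H(2H−1)(1−H)(3−2H)`. -/
def CH (H : ℝ) : ℝ := H * (2 * H - 1) * (1 - H) * (3 - 2 * H)

/-- A Poisson random measure with intensity `β` times Lebesgue measure on a region
`D ⊆ ℝ × ℝ`: for measurable `A ⊆ D` of finite Lebesgue measure, `M · A` is a Poisson
random variable with mean `β · volume A`; counts over disjoint sets are independent;
and `M ω` is finitely additive on disjoint sets of finite measure. -/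
structure IsPoissonRandomMeasure {Ω : Type*} [MeasureSpace Ω]
    (β : ℝ) (D : Set (ℝ × ℝ)) (M : Ω → Set (ℝ × ℝ) → ℕ) : Prop where
  measurable_eval : ∀ A : Set (ℝ × ℝ), MeasurableSet A → Measurable fun ω => M ω A
  law : ∀ A : Set (ℝ × ℝ), MeasurableSet A → A ⊆ D → volume A ≠ ⊤ →
    Measure.map (fun ω => M ω A) ℙ = poissonMeasure ((β * (volume A).toReal).toNNReal)
  indep : ∀ {ι : Type} (A : ι → Set (ℝ × ℝ)), (∀ i, MeasurableSet (A i)) →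
    (∀ i, A i ⊆ D) → (∀ i, volume (A i) ≠ ⊤) → Pairwise (Function.onFun Disjoint A) →
    iIndepFun (fun i ω => M ω (A i)) ℙ
  add : ∀ (ω : Ω) (A B : Set (ℝ × ℝ)), MeasurableSet A → MeasurableSet B →
    volume A ≠ ⊤ → volume B ≠ ⊤ → Disjoint A B → M ω (A ∪ B) = M ω A + M ω B

/-- A two-parameter Poisson process with intensity `β` on `ℝ₊ × ℝ₋`: a jointly
measurable `ℕ`-valued random field with `N ω x y = M ω ([0,x] × [y,0])` for a Poisson
random measure `M` with intensity `β` times Lebesgue measure on `ℝ₊ × ℝ₋`. -/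
def IsTwoParamPoisson {Ω : Type*} [MeasureSpace Ω] (β : ℝ)
    (N : Ω → ℝ → ℝ → ℕ) : Prop :=
  Measurable (fun p : Ω × ℝ × ℝ => N p.1 p.2.1 p.2.2) ∧
  ∃ M : Ω → Set (ℝ × ℝ) → ℕ,
    IsPoissonRandomMeasure β (Set.Ici 0 ×ˢ Set.Iic 0) M ∧
    ∀ ω x y, N ω x y = M ω (Set.Icc 0 x ×ˢ Set.Icc y 0)

/-- A two-parameter Poisson process with intensity `β` on `ℝ × ℝ`: a jointly measurable
`ℕ`-valued random field with `N ω x y = M ω (R(x,y))` where `R(x,y)` is the closed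
rectangle with opposite corners `(0,0)` and `(x,y)`, for a Poisson random measure `M`
with intensity `β` times Lebesgue measure. -/
def IsTwoParamPoissonPlane {Ω : Type*} [MeasureSpace Ω] (β : ℝ)
    (N : Ω → ℝ → ℝ → ℕ) : Prop :=
  Measurable (fun p : Ω × ℝ × ℝ => N p.1 p.2.1 p.2.2) ∧
  ∃ M : Ω → Set (ℝ × ℝ) → ℕ,
    IsPoissonRandomMeasure β Set.univ M ∧
    ∀ ω x y, N ω x y = M ω (Set.uIcc 0 x ×ˢ Set.uIcc 0 y)

/-- `I₁(n,f)`, the integral over `Ω₁ = {0 < x₁ ≤ x₂, y₂ ≤ y₁ ≤ 0}`;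
here `p.1 = (x₁, y₁)` and `p.2 = (x₂, y₂)`. -/
def I1 (n : ℝ) (f : ℝ → ℝ → ℝ) : ℝ :=
  n ^ 2 * ∫ p in {p : (ℝ × ℝ) × ℝ × ℝ |
      0 < p.1.1 ∧ p.1.1 ≤ p.2.1 ∧ p.2.2 ≤ p.1.2 ∧ p.1.2 ≤ 0},
    f p.1.1 p.1.2 * f p.2.1 p.2.2 * Real.sqrt (p.1.1 * |p.1.2|) *
      Real.sqrt (p.2.1 * |p.2.2|) * Real.exp (-2 * n * (p.1.1 * p.1.2 - p.2.1 * p.2.2))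

/-- `I₂(n,f)`, the integral over `Ω₂ = {0 < x₁ ≤ x₂, y₁ < y₂ ≤ 0}`;
here `p.1 = (x₁, y₁)` and `p.2 = (x₂, y₂)`. -/
def I2 (n : ℝ) (f : ℝ → ℝ → ℝ) : ℝ :=
  n ^ 2 * ∫ p in {p : (ℝ × ℝ) × ℝ × ℝ |
      0 < p.1.1 ∧ p.1.1 ≤ p.2.1 ∧ p.1.2 < p.2.2 ∧ p.2.2 ≤ 0},
    f p.1.1 p.1.2 * f p.2.1 p.2.2 * Real.sqrt (p.1.1 * |p.1.2|) *
      Real.sqrt (p.2.1 * |p.2.2|) *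
      Real.exp (-2 * n * (p.1.1 * (p.2.2 - p.1.2) - (p.2.1 - p.1.1) * p.2.2))

/-- `F_{n,f}(x,y) = √(x|y|) n² ∫_x^∞ ∫_y^0 f(x₂,y₂) √(x₂|y₂|)
e^{−2n[x(y₂−y)−(x₂−x)y₂]} dx₂ dy₂`. -/
def Fnf (n : ℝ) (f : ℝ → ℝ → ℝ) (x y : ℝ) : ℝ :=
  Real.sqrt (x * |y|) * n ^ 2 *
    ∫ q in Set.Ioi x ×ˢ Set.Ioc y 0,
      f q.1 q.2 * Real.sqrt (q.1 * |q.2|) *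
        Real.exp (-2 * n * (x * (q.2 - y) - (q.1 - x) * q.2))

end


section Aux
open MeasureTheory Set Real

private lemma lint_exp_Ici {c : ℝ} (hc : 0 < c) (a : ℝ) :
    ∫⁻ x in Set.Ici a, ENNReal.ofReal (Real.exp (-(c * x))) =
      ENNReal.ofReal (Real.exp (-(c * a)) / c) := by
  rw [← Measure.restrict_congr_set Ioi_ae_eq_Ici,
    ← ofReal_integral_eq_lintegral_ofReal
      (by have h := exp_neg_integrableOn_Ioi a hc; simp only [neg_mul] at h; exact h)
      (Filter.Eventually.of_forall fun x => (Real.exp_pos _).le)]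
  congr 1
  have h1 := integral_comp_mul_left_Ioi (fun x => Real.exp (-x)) a hc
  simp only [smul_eq_mul] at h1
  rw [h1, integral_exp_neg_Ioi, div_eq_inv_mul]

private lemma lint_exp_Iic {c : ℝ} (hc : 0 < c) (t : ℝ) :
    ∫⁻ v in Set.Iic t, ENNReal.ofReal (Real.exp (c * v)) =
      ENNReal.ofReal (Real.exp (c * t) / c) := by
  have hmp : MeasurePreserving (fun x : ℝ => -x) volume volume :=
    Measure.measurePreserving_neg _
  have hemb : MeasurableEmbedding (fun x : ℝ => -x) :=
    (Homeomorph.neg ℝ).measurableEmbedding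
  have h := hmp.setLIntegral_comp_preimage_emb hemb
    (fun x => ENNReal.ofReal (Real.exp (-(c * x)))) (Set.Ioi (-t))
  have hpre : (fun x : ℝ => -x) ⁻¹' (Set.Ioi (-t)) = Set.Iio t := by
    ext x; simp
  rw [hpre] at h
  have h2 : ∀ x : ℝ, ENNReal.ofReal (Real.exp (-(c * -x))) = ENNReal.ofReal (Real.exp (c * x)) := by
    intro x; ring_nf
  simp only [h2] at h
  rw [← Measure.restrict_congr_set Iio_ae_eq_Iic, h, Measure.restrict_congr_set Ioi_ae_eq_Ici, lint_exp_Ici hc, mul_neg, neg_neg]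

private lemma sqrt_amgm {u v : ℝ} (hu : 0 ≤ u) (hv : 0 ≤ v) : Real.sqrt (u * v) ≤ u / 2 + v / 2 := by
  have h := Real.sqrt_le_sqrt (show u * v ≤ (u / 2 + v / 2) ^ 2 by nlinarith [sq_nonneg (u - v)])
  rwa [Real.sqrt_sq (by positivity)] at h

private lemma row {n a y : ℝ} (hn : 0 < n) (ha : 0 < a) (hy : y < 0) :
    ∫⁻ q : ℝ × ℝ in Set.Ici a ×ˢ Set.Iic y,
      ENNReal.ofReal (Real.sqrt (a * |y|) * Real.sqrt (q.1 * |q.2|) *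
        Real.exp (-2 * n * (a * y - q.1 * q.2))) ≤ ENNReal.ofReal (1 / (4 * n ^ 2)) := by
  have hmeas1 : Measurable fun q : ℝ × ℝ =>
      ENNReal.ofReal (-y * q.1 / 2 * Real.exp (-2 * n * (a * y - q.1 * q.2))) := by fun_prop
  have hmeas2 : Measurable fun q : ℝ × ℝ =>
      ENNReal.ofReal (a * -q.2 / 2 * Real.exp (-2 * n * (a * y - q.1 * q.2))) := by fun_prop
  have step1 : ∫⁻ q : ℝ × ℝ in Set.Ici a ×ˢ Set.Iic y,
      ENNReal.ofReal (Real.sqrt (a * |y|) * Real.sqrt (q.1 * |q.2|) *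
        Real.exp (-2 * n * (a * y - q.1 * q.2)))
      ≤ (∫⁻ q : ℝ × ℝ in Set.Ici a ×ˢ Set.Iic y,
          ENNReal.ofReal (-y * q.1 / 2 * Real.exp (-2 * n * (a * y - q.1 * q.2))))
        + ∫⁻ q : ℝ × ℝ in Set.Ici a ×ˢ Set.Iic y,
          ENNReal.ofReal (a * -q.2 / 2 * Real.exp (-2 * n * (a * y - q.1 * q.2))) := by
    rw [← lintegral_add_left hmeas1]
    refine setLIntegral_mono (by fun_prop) ?_
    rintro ⟨x, v⟩ ⟨hx, hv⟩
    simp only [Set.mem_Ici] at hx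
    simp only [Set.mem_Iic] at hv
    have hx0 : 0 < x := ha.trans_le hx
    have hv0 : v < 0 := lt_of_le_of_lt hv hy
    have hE : (0:ℝ) < Real.exp (-2 * n * (a * y - x * v)) := Real.exp_pos _
    have hs : Real.sqrt (a * |y|) * Real.sqrt (x * |v|) ≤ -y * x / 2 + a * -v / 2 := by
      rw [← Real.sqrt_mul (by positivity)]
      have h1 : a * |y| * (x * |v|) = (-y * x) * (a * -v) := by
        rw [abs_of_neg hy, abs_of_neg hv0]; ring
      rw [h1]
      exact sqrt_amgm (by nlinarith) (by nlinarith)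
    calc ENNReal.ofReal (Real.sqrt (a * |y|) * Real.sqrt (x * |v|) *
          Real.exp (-2 * n * (a * y - x * v)))
        ≤ ENNReal.ofReal ((-y * x / 2 + a * -v / 2) * Real.exp (-2 * n * (a * y - x * v))) := by
          exact ENNReal.ofReal_le_ofReal (mul_le_mul_of_nonneg_right hs hE.le)
      _ = ENNReal.ofReal (-y * x / 2 * Real.exp (-2 * n * (a * y - x * v))
            + a * -v / 2 * Real.exp (-2 * n * (a * y - x * v))) := by ring_nf
      _ ≤ _ := ENNReal.ofReal_add_le
  have hT1 : (∫⁻ q : ℝ × ℝ in Set.Ici a ×ˢ Set.Iic y,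
      ENNReal.ofReal (-y * q.1 / 2 * Real.exp (-2 * n * (a * y - q.1 * q.2))))
      = ENNReal.ofReal (1 / (8 * n ^ 2)) := by
    rw [Measure.volume_eq_prod, ← Measure.prod_restrict,
      lintegral_prod _ (by fun_prop)]
    have inner : ∀ x : ℝ, x ∈ Set.Ici a →
        (∫⁻ v in Set.Iic y, ENNReal.ofReal (-y * x / 2 * Real.exp (-2 * n * (a * y - x * v))))
        = ENNReal.ofReal (-y / (4 * n) * Real.exp (-2 * n * a * y) * Real.exp (-(2 * n * -y * x))) := by
      intro x hx
      have hx0 : 0 < x := ha.trans_le (Set.mem_Ici.mp hx)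
      have hcx : 0 < 2 * n * x := by positivity
      have hy' : (0:ℝ) < -y := by linarith
      have hnn : (0:ℝ) ≤ -y * x / 2 * Real.exp (-2 * n * a * y) :=
        mul_nonneg (div_nonneg (mul_nonneg hy'.le hx0.le) two_pos.le) (Real.exp_pos _).le
      have hrw : ∀ v : ℝ, (-y * x / 2 * Real.exp (-2 * n * (a * y - x * v)))
          = (-y * x / 2 * Real.exp (-2 * n * a * y)) * Real.exp ((2 * n * x) * v) := by
        intro v
        rw [show (-2:ℝ) * n * (a * y - x * v) = -2 * n * a * y + 2 * n * x * v by ring,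
          Real.exp_add]
        ring
      simp only [hrw, ENNReal.ofReal_mul hnn]
      rw [lintegral_const_mul' _ _ ENNReal.ofReal_ne_top, lint_exp_Iic hcx,
        ← ENNReal.ofReal_mul (by positivity)]
      congr 1
      rw [show (2:ℝ) * n * x * y = -(2 * n * -y * x) by ring]
      field_simp
      ring
    rw [setLIntegral_congr_fun measurableSet_Ici inner]
    have hy' : (0:ℝ) < -y := by linarith
    have hnn2 : (0:ℝ) ≤ -y / (4 * n) * Real.exp (-2 * n * a * y) :=
      mul_nonneg (div_nonneg hy'.le (by positivity)) (Real.exp_pos _).le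
    simp only [ENNReal.ofReal_mul hnn2]
    rw [lintegral_const_mul' _ _ ENNReal.ofReal_ne_top,
      lint_exp_Ici (show (0:ℝ) < 2 * n * -y by nlinarith),
      ← ENNReal.ofReal_mul (by positivity)]
    congr 1
    have hexp : Real.exp (-2 * n * a * y) * Real.exp (-(2 * n * -y * a)) = 1 := by
      rw [← Real.exp_add, show -2 * n * a * y + -(2 * n * -y * a) = 0 by ring, Real.exp_zero]
    have h9 : -y / (4 * n) * Real.exp (-2 * n * a * y) * (Real.exp (-(2 * n * -y * a)) / (2 * n * -y))
        = (Real.exp (-2 * n * a * y) * Real.exp (-(2 * n * -y * a))) * (-y / (4 * n) / (2 * n * -y)) := by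
      ring
    rw [h9, hexp, one_mul]
    rw [div_div, div_eq_div_iff (by positivity) (by positivity)]
    ring
  have hT2 : (∫⁻ q : ℝ × ℝ in Set.Ici a ×ˢ Set.Iic y,
      ENNReal.ofReal (a * -q.2 / 2 * Real.exp (-2 * n * (a * y - q.1 * q.2))))
      = ENNReal.ofReal (1 / (8 * n ^ 2)) := by
    rw [Measure.volume_eq_prod, ← Measure.prod_restrict,
      lintegral_prod_symm _ (by fun_prop)]
    have inner : ∀ v : ℝ, v ∈ Set.Iic y →
        (∫⁻ x in Set.Ici a, ENNReal.ofReal (a * -v / 2 * Real.exp (-2 * n * (a * y - x * v))))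
        = ENNReal.ofReal (a / (4 * n) * Real.exp (-2 * n * a * y) * Real.exp ((2 * n * a) * v)) := by
      intro v hv
      have hv0 : v < 0 := lt_of_le_of_lt (Set.mem_Iic.mp hv) hy
      have hv' : (0:ℝ) < -v := by linarith
      have hc : (0:ℝ) < 2 * n * -v := by positivity
      have hnn : (0:ℝ) ≤ a * -v / 2 * Real.exp (-2 * n * a * y) :=
        mul_nonneg (div_nonneg (mul_nonneg ha.le hv'.le) two_pos.le) (Real.exp_pos _).le
      have hrw : ∀ x : ℝ, (a * -v / 2 * Real.exp (-2 * n * (a * y - x * v)))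
          = (a * -v / 2 * Real.exp (-2 * n * a * y)) * Real.exp (-((2 * n * -v) * x)) := by
        intro x
        rw [show (-2:ℝ) * n * (a * y - x * v) = -2 * n * a * y + -((2 * n * -v) * x) by ring,
          Real.exp_add]
        ring
      simp only [hrw, ENNReal.ofReal_mul hnn]
      rw [lintegral_const_mul' _ _ ENNReal.ofReal_ne_top, lint_exp_Ici hc,
        ← ENNReal.ofReal_mul hnn]
      congr 1
      rw [show -(2 * n * -v * a) = (2 * n * a) * v by ring]
      field_simp [hn.ne', hv0.ne]
      ring
    rw [setLIntegral_congr_fun measurableSet_Iic inner]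
    have hnn2 : (0:ℝ) ≤ a / (4 * n) * Real.exp (-2 * n * a * y) :=
      mul_nonneg (div_nonneg ha.le (by positivity)) (Real.exp_pos _).le
    simp only [ENNReal.ofReal_mul hnn2]
    rw [lintegral_const_mul' _ _ ENNReal.ofReal_ne_top,
      lint_exp_Iic (show (0:ℝ) < 2 * n * a by positivity),
      ← ENNReal.ofReal_mul hnn2]
    congr 1
    have hexp : Real.exp (-2 * n * a * y) * Real.exp (2 * n * a * y) = 1 := by
      rw [← Real.exp_add, show -2 * n * a * y + 2 * n * a * y = 0 by ring, Real.exp_zero]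
    have h9 : a / (4 * n) * Real.exp (-2 * n * a * y) * (Real.exp (2 * n * a * y) / (2 * n * a))
        = (Real.exp (-2 * n * a * y) * Real.exp (2 * n * a * y)) * (a / (4 * n) / (2 * n * a)) := by
      ring
    rw [h9, hexp, one_mul, div_div, div_eq_div_iff (by positivity) (by positivity)]
    ring
  calc ∫⁻ q : ℝ × ℝ in Set.Ici a ×ˢ Set.Iic y,
      ENNReal.ofReal (Real.sqrt (a * |y|) * Real.sqrt (q.1 * |q.2|) *
        Real.exp (-2 * n * (a * y - q.1 * q.2))) ≤ _ := step1
    _ = ENNReal.ofReal (1 / (8 * n ^ 2)) + ENNReal.ofReal (1 / (8 * n ^ 2)) := by rw [hT1, hT2]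
    _ = ENNReal.ofReal (1 / (4 * n ^ 2)) := by
        rw [← ENNReal.ofReal_add (by positivity) (by positivity)]
        congr 1
        rw [← add_div, div_eq_div_iff (by positivity) (by positivity)]
        ring

private lemma col {n a y : ℝ} (hn : 0 < n) (ha : 0 < a) (hy : y < 0) :
    ∫⁻ p : ℝ × ℝ in Set.Ioc 0 a ×ˢ Set.Icc y 0,
      ENNReal.ofReal (Real.sqrt (p.1 * |p.2|) * Real.sqrt (a * |y|) *
        Real.exp (-2 * n * (p.1 * p.2 - a * y))) ≤ ENNReal.ofReal (1 / (4 * n ^ 2)) := by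
  have hy' : (0:ℝ) < -y := by linarith
  have hmeas1 : Measurable fun p : ℝ × ℝ =>
      ENNReal.ofReal (p.1 * -y / 2 * Real.exp (-2 * n * (p.1 * p.2 - a * y))) := by fun_prop
  have step1 : ∫⁻ p : ℝ × ℝ in Set.Ioc 0 a ×ˢ Set.Icc y 0,
      ENNReal.ofReal (Real.sqrt (p.1 * |p.2|) * Real.sqrt (a * |y|) *
        Real.exp (-2 * n * (p.1 * p.2 - a * y)))
      ≤ (∫⁻ p : ℝ × ℝ in Set.Ioc 0 a ×ˢ Set.Icc y 0,
          ENNReal.ofReal (p.1 * -y / 2 * Real.exp (-2 * n * (p.1 * p.2 - a * y))))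
        + ∫⁻ p : ℝ × ℝ in Set.Ioc 0 a ×ˢ Set.Icc y 0,
          ENNReal.ofReal (a * -p.2 / 2 * Real.exp (-2 * n * (p.1 * p.2 - a * y))) := by
    rw [← lintegral_add_left hmeas1]
    refine setLIntegral_mono (by fun_prop) ?_
    rintro ⟨u, w⟩ ⟨hu, hw⟩
    simp only [Set.mem_Ioc] at hu
    simp only [Set.mem_Icc] at hw
    have hu0 : 0 < u := hu.1
    have hw0 : w ≤ 0 := hw.2
    have hE : (0:ℝ) < Real.exp (-2 * n * (u * w - a * y)) := Real.exp_pos _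
    have hs : Real.sqrt (u * |w|) * Real.sqrt (a * |y|) ≤ u * -y / 2 + a * -w / 2 := by
      rw [← Real.sqrt_mul (by positivity)]
      have h1 : u * |w| * (a * |y|) = (u * -y) * (a * -w) := by
        rw [abs_of_nonpos hw0, abs_of_neg hy]; ring
      rw [h1]
      exact sqrt_amgm (by nlinarith) (by nlinarith)
    calc ENNReal.ofReal (Real.sqrt (u * |w|) * Real.sqrt (a * |y|) *
          Real.exp (-2 * n * (u * w - a * y)))
        ≤ ENNReal.ofReal ((u * -y / 2 + a * -w / 2) * Real.exp (-2 * n * (u * w - a * y))) :=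
          ENNReal.ofReal_le_ofReal (mul_le_mul_of_nonneg_right hs hE.le)
      _ = ENNReal.ofReal (u * -y / 2 * Real.exp (-2 * n * (u * w - a * y))
            + a * -w / 2 * Real.exp (-2 * n * (u * w - a * y))) := by ring_nf
      _ ≤ _ := ENNReal.ofReal_add_le
  have hT1 : (∫⁻ p : ℝ × ℝ in Set.Ioc 0 a ×ˢ Set.Icc y 0,
      ENNReal.ofReal (p.1 * -y / 2 * Real.exp (-2 * n * (p.1 * p.2 - a * y))))
      ≤ ENNReal.ofReal (1 / (8 * n ^ 2)) := by
    rw [Measure.volume_eq_prod, ← Measure.prod_restrict, lintegral_prod _ (by fun_prop)]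
    have inner : ∀ u : ℝ, u ∈ Set.Ioc 0 a →
        (∫⁻ w in Set.Icc y 0, ENNReal.ofReal (u * -y / 2 * Real.exp (-2 * n * (u * w - a * y))))
        ≤ ENNReal.ofReal (-y / (4 * n) * Real.exp (2 * n * a * y) * Real.exp ((2 * n * -y) * u)) := by
      intro u hu
      have hu0 : 0 < u := hu.1
      have hc : (0:ℝ) < 2 * n * u := by positivity
      have hnn : (0:ℝ) ≤ u * -y / 2 * Real.exp (2 * n * a * y) :=
        mul_nonneg (div_nonneg (mul_nonneg hu0.le hy'.le) two_pos.le) (Real.exp_pos _).le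
      have hrw : ∀ w : ℝ, (u * -y / 2 * Real.exp (-2 * n * (u * w - a * y)))
          = (u * -y / 2 * Real.exp (2 * n * a * y)) * Real.exp (-((2 * n * u) * w)) := by
        intro w
        rw [show (-2:ℝ) * n * (u * w - a * y) = 2 * n * a * y + -((2 * n * u) * w) by ring,
          Real.exp_add]
        ring
      simp only [hrw, ENNReal.ofReal_mul hnn]
      rw [lintegral_const_mul' _ _ ENNReal.ofReal_ne_top]
      calc ENNReal.ofReal (u * -y / 2 * Real.exp (2 * n * a * y)) *
            ∫⁻ w in Set.Icc y 0, ENNReal.ofReal (Real.exp (-((2 * n * u) * w)))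
          ≤ ENNReal.ofReal (u * -y / 2 * Real.exp (2 * n * a * y)) *
            ∫⁻ w in Set.Ici y, ENNReal.ofReal (Real.exp (-((2 * n * u) * w))) := by
            gcongr
            exact Set.Icc_subset_Ici_self
        _ = ENNReal.ofReal (u * -y / 2 * Real.exp (2 * n * a * y)) *
            ENNReal.ofReal (Real.exp (-(2 * n * u * y)) / (2 * n * u)) := by
            rw [lint_exp_Ici hc]
        _ = ENNReal.ofReal (-y / (4 * n) * Real.exp (2 * n * a * y) * Real.exp ((2 * n * -y) * u)) := by
            rw [← ENNReal.ofReal_mul hnn]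
            congr 1
            rw [show -(2 * n * u * y) = (2 * n * -y) * u by ring]
            field_simp [hn.ne', hu0.ne']
            ring
    calc ∫⁻ u in Set.Ioc 0 a, ∫⁻ w in Set.Icc y 0,
          ENNReal.ofReal (u * -y / 2 * Real.exp (-2 * n * (u * w - a * y)))
        ≤ ∫⁻ u in Set.Ioc 0 a,
          ENNReal.ofReal (-y / (4 * n) * Real.exp (2 * n * a * y) * Real.exp ((2 * n * -y) * u)) :=
          setLIntegral_mono (by fun_prop) inner
      _ ≤ ∫⁻ u in Set.Iic a,
          ENNReal.ofReal (-y / (4 * n) * Real.exp (2 * n * a * y) * Real.exp ((2 * n * -y) * u)) :=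
          lintegral_mono' (Measure.restrict_mono Set.Ioc_subset_Iic_self le_rfl) le_rfl
      _ = ENNReal.ofReal (1 / (8 * n ^ 2)) := by
          have hnn2 : (0:ℝ) ≤ -y / (4 * n) * Real.exp (2 * n * a * y) :=
            mul_nonneg (div_nonneg hy'.le (by positivity)) (Real.exp_pos _).le
          simp only [ENNReal.ofReal_mul hnn2]
          rw [lintegral_const_mul' _ _ ENNReal.ofReal_ne_top,
            lint_exp_Iic (show (0:ℝ) < 2 * n * -y by positivity),
            ← ENNReal.ofReal_mul hnn2]
          congr 1
          have hexp : Real.exp (2 * n * a * y) * Real.exp (2 * n * -y * a) = 1 := by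
            rw [← Real.exp_add, show 2 * n * a * y + 2 * n * -y * a = 0 by ring, Real.exp_zero]
          have h9 : -y / (4 * n) * Real.exp (2 * n * a * y) * (Real.exp (2 * n * -y * a) / (2 * n * -y))
              = (Real.exp (2 * n * a * y) * Real.exp (2 * n * -y * a)) * (-y / (4 * n) / (2 * n * -y)) := by
            ring
          rw [h9, hexp, one_mul, div_div, div_eq_div_iff (by positivity) (by positivity)]
          ring
  have hT2 : (∫⁻ p : ℝ × ℝ in Set.Ioc 0 a ×ˢ Set.Icc y 0,
      ENNReal.ofReal (a * -p.2 / 2 * Real.exp (-2 * n * (p.1 * p.2 - a * y))))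
      ≤ ENNReal.ofReal (1 / (8 * n ^ 2)) := by
    rw [Measure.volume_eq_prod, ← Measure.prod_restrict, lintegral_prod_symm _ (by fun_prop),
      ← Measure.restrict_congr_set Ico_ae_eq_Icc]
    have inner : ∀ w : ℝ, w ∈ Set.Ico y 0 →
        (∫⁻ u in Set.Ioc 0 a, ENNReal.ofReal (a * -w / 2 * Real.exp (-2 * n * (u * w - a * y))))
        ≤ ENNReal.ofReal (a / (4 * n) * Real.exp (2 * n * a * y) * Real.exp (-((2 * n * a) * w))) := by
      intro w hw
      have hw0 : w < 0 := hw.2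
      have hw' : (0:ℝ) < -w := by linarith
      have hc : (0:ℝ) < 2 * n * -w := by positivity
      have hnn : (0:ℝ) ≤ a * -w / 2 * Real.exp (2 * n * a * y) :=
        mul_nonneg (div_nonneg (mul_nonneg ha.le hw'.le) two_pos.le) (Real.exp_pos _).le
      have hrw : ∀ u : ℝ, (a * -w / 2 * Real.exp (-2 * n * (u * w - a * y)))
          = (a * -w / 2 * Real.exp (2 * n * a * y)) * Real.exp ((2 * n * -w) * u) := by
        intro u
        rw [show (-2:ℝ) * n * (u * w - a * y) = 2 * n * a * y + (2 * n * -w) * u by ring,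
          Real.exp_add]
        ring
      simp only [hrw, ENNReal.ofReal_mul hnn]
      rw [lintegral_const_mul' _ _ ENNReal.ofReal_ne_top]
      calc ENNReal.ofReal (a * -w / 2 * Real.exp (2 * n * a * y)) *
            ∫⁻ u in Set.Ioc 0 a, ENNReal.ofReal (Real.exp ((2 * n * -w) * u))
          ≤ ENNReal.ofReal (a * -w / 2 * Real.exp (2 * n * a * y)) *
            ∫⁻ u in Set.Iic a, ENNReal.ofReal (Real.exp ((2 * n * -w) * u)) := by
            gcongr
            exact Set.Ioc_subset_Iic_self
        _ = ENNReal.ofReal (a * -w / 2 * Real.exp (2 * n * a * y)) *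
            ENNReal.ofReal (Real.exp (2 * n * -w * a) / (2 * n * -w)) := by
            rw [lint_exp_Iic hc]
        _ = ENNReal.ofReal (a / (4 * n) * Real.exp (2 * n * a * y) * Real.exp (-((2 * n * a) * w))) := by
            rw [← ENNReal.ofReal_mul hnn]
            congr 1
            rw [show (2:ℝ) * n * -w * a = -((2 * n * a) * w) by ring]
            field_simp [hn.ne', hw0.ne]
            ring
    calc ∫⁻ w in Set.Ico y 0, ∫⁻ u in Set.Ioc 0 a,
          ENNReal.ofReal (a * -w / 2 * Real.exp (-2 * n * (u * w - a * y)))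
        ≤ ∫⁻ w in Set.Ico y 0,
          ENNReal.ofReal (a / (4 * n) * Real.exp (2 * n * a * y) * Real.exp (-((2 * n * a) * w))) :=
          setLIntegral_mono (by fun_prop) inner
      _ ≤ ∫⁻ w in Set.Ici y,
          ENNReal.ofReal (a / (4 * n) * Real.exp (2 * n * a * y) * Real.exp (-((2 * n * a) * w))) :=
          lintegral_mono' (Measure.restrict_mono Set.Ico_subset_Ici_self le_rfl) le_rfl
      _ = ENNReal.ofReal (1 / (8 * n ^ 2)) := by
          have hnn2 : (0:ℝ) ≤ a / (4 * n) * Real.exp (2 * n * a * y) :=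
            mul_nonneg (div_nonneg ha.le (by positivity)) (Real.exp_pos _).le
          simp only [ENNReal.ofReal_mul hnn2]
          rw [lintegral_const_mul' _ _ ENNReal.ofReal_ne_top,
            lint_exp_Ici (show (0:ℝ) < 2 * n * a by positivity),
            ← ENNReal.ofReal_mul hnn2]
          congr 1
          have hexp : Real.exp (2 * n * a * y) * Real.exp (-(2 * n * a * y)) = 1 := by
            rw [← Real.exp_add, add_neg_cancel, Real.exp_zero]
          have h9 : a / (4 * n) * Real.exp (2 * n * a * y) * (Real.exp (-(2 * n * a * y)) / (2 * n * a))
              = (Real.exp (2 * n * a * y) * Real.exp (-(2 * n * a * y))) * (a / (4 * n) / (2 * n * a)) := by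
            ring
          rw [h9, hexp, one_mul, div_div, div_eq_div_iff (by positivity) (by positivity)]
          ring
  calc ∫⁻ p : ℝ × ℝ in Set.Ioc 0 a ×ˢ Set.Icc y 0,
      ENNReal.ofReal (Real.sqrt (p.1 * |p.2|) * Real.sqrt (a * |y|) *
        Real.exp (-2 * n * (p.1 * p.2 - a * y))) ≤ _ := step1
    _ ≤ ENNReal.ofReal (1 / (8 * n ^ 2)) + ENNReal.ofReal (1 / (8 * n ^ 2)) := add_le_add hT1 hT2
    _ = ENNReal.ofReal (1 / (4 * n ^ 2)) := by
        rw [← ENNReal.ofReal_add (by positivity) (by positivity)]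
        congr 1
        rw [← add_div, div_eq_div_iff (by positivity) (by positivity)]
        ring

/-- For every `n > 0` and every nonnegative measurable `f` on
`(0,∞) × (−∞,0]` with `∫₀^∞∫_{−∞}^0 f² < ∞`,
`I₁(n,f) ≤ (37/8) ∫₀^∞∫_{−∞}^0 f(x,y)² dx dy`. -/
theorem stmt8 {n : ℝ} (hn : 0 < n) (f : ℝ → ℝ → ℝ)
    (hf_meas : Measurable (Function.uncurry f))
    (hf_nonneg : ∀ x y : ℝ, 0 < x → y ≤ 0 → 0 ≤ f x y)
    (hf_sq : IntegrableOn (fun p : ℝ × ℝ => (f p.1 p.2) ^ 2)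
      (Set.Ioi (0 : ℝ) ×ˢ Set.Iic (0 : ℝ))) :
    I1 n f ≤ 37 / 8 * ∫ p in Set.Ioi (0 : ℝ) ×ˢ Set.Iic (0 : ℝ), (f p.1 p.2) ^ 2 := by
  classical
  set D : Set (ℝ × ℝ) := Set.Ioi (0 : ℝ) ×ˢ Set.Iic (0 : ℝ) with hDdef
  have hD : MeasurableSet D := measurableSet_Ioi.prod measurableSet_Iic
  set S : Set ((ℝ × ℝ) × ℝ × ℝ) :=
    {p | 0 < p.1.1 ∧ p.1.1 ≤ p.2.1 ∧ p.2.2 ≤ p.1.2 ∧ p.1.2 ≤ 0} with hSdef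
  have hS : MeasurableSet S := by
    exact (measurableSet_lt measurable_const measurable_fst.fst).inter
      ((measurableSet_le measurable_fst.fst measurable_snd.fst).inter
        ((measurableSet_le measurable_snd.snd measurable_fst.snd).inter
          (measurableSet_le measurable_fst.snd measurable_const)))
  set G : (ℝ × ℝ) × ℝ × ℝ → ℝ := fun p =>
    f p.1.1 p.1.2 * f p.2.1 p.2.2 * Real.sqrt (p.1.1 * |p.1.2|) *
      Real.sqrt (p.2.1 * |p.2.2|) * Real.exp (-2 * n * (p.1.1 * p.1.2 - p.2.1 * p.2.2))
    with hGdef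
  set Kf : (ℝ × ℝ) × ℝ × ℝ → ℝ := fun p =>
    Real.sqrt (p.1.1 * |p.1.2|) * Real.sqrt (p.2.1 * |p.2.2|) *
      Real.exp (-2 * n * (p.1.1 * p.1.2 - p.2.1 * p.2.2)) with hKfdef
  have hf1 : Measurable fun p : (ℝ × ℝ) × ℝ × ℝ => f p.1.1 p.1.2 :=
    hf_meas.comp (measurable_fst.fst.prodMk measurable_fst.snd)
  have hf2 : Measurable fun p : (ℝ × ℝ) × ℝ × ℝ => f p.2.1 p.2.2 :=
    hf_meas.comp (measurable_snd.fst.prodMk measurable_snd.snd)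
  have hKfm : Measurable Kf := by fun_prop
  have hGm : Measurable G := (((hf1.mul hf2).mul (by fun_prop)).mul (by fun_prop)).mul (by fun_prop)
  have hRHS : 0 ≤ ∫ p in D, (f p.1 p.2) ^ 2 := integral_nonneg fun p => sq_nonneg _
  have hI1 : I1 n f = n ^ 2 * ∫ p in S, G p := rfl
  rw [hI1]
  by_cases hInt : Integrable G (volume.restrict S)
  swap
  · rw [integral_undef hInt, mul_zero]
    nlinarith [hRHS]
  -- nonnegativity of G on S
  have hGnn : 0 ≤ᵐ[volume.restrict S] G := by
    rw [Filter.EventuallyLE, ae_restrict_iff' hS]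
    refine Filter.Eventually.of_forall fun p hp => ?_
    obtain ⟨h1, h2, h3, h4⟩ := hp
    have hx2 : 0 < p.2.1 := lt_of_lt_of_le h1 h2
    have hy2 : p.2.2 ≤ 0 := le_trans h3 h4
    exact mul_nonneg (mul_nonneg (mul_nonneg (mul_nonneg
      (hf_nonneg _ _ h1 h4) (hf_nonneg _ _ hx2 hy2)) (Real.sqrt_nonneg _))
      (Real.sqrt_nonneg _)) (Real.exp_pos _).le
  have hkey : ∫ p in S, G p = (∫⁻ p in S, ENNReal.ofReal (G p)).toReal :=
    integral_eq_lintegral_of_nonneg_ae hGnn hGm.aestronglyMeasurable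
  -- the two indicator functions
  set A : (ℝ × ℝ) × ℝ × ℝ → ENNReal :=
    S.indicator (fun p => ENNReal.ofReal ((f p.1.1 p.1.2) ^ 2 / 2 * Kf p)) with hAdef
  set B : (ℝ × ℝ) × ℝ × ℝ → ENNReal :=
    S.indicator (fun p => ENNReal.ofReal ((f p.2.1 p.2.2) ^ 2 / 2 * Kf p)) with hBdef
  have hAm : Measurable A :=
    (ENNReal.measurable_ofReal.comp (((hf1.pow_const 2).div_const 2).mul hKfm)).indicator hS
  have hBm : Measurable B :=
    (ENNReal.measurable_ofReal.comp (((hf2.pow_const 2).div_const 2).mul hKfm)).indicator hS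
  have hptwise : ∀ p, S.indicator (fun p => ENNReal.ofReal (G p)) p ≤ A p + B p := by
    intro p
    by_cases hp : p ∈ S
    · rw [hAdef, hBdef, Set.indicator_of_mem hp, Set.indicator_of_mem hp,
        Set.indicator_of_mem hp]
      have hKnn : 0 ≤ Kf p :=
        mul_nonneg (mul_nonneg (Real.sqrt_nonneg _) (Real.sqrt_nonneg _)) (Real.exp_pos _).le
      have hGle : G p ≤ (f p.1.1 p.1.2) ^ 2 / 2 * Kf p + (f p.2.1 p.2.2) ^ 2 / 2 * Kf p := by
        have h1 : G p = (f p.1.1 p.1.2 * f p.2.1 p.2.2) * Kf p := by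
          rw [hGdef, hKfdef]; ring
        rw [h1]
        nlinarith [mul_nonneg (sq_nonneg (f p.1.1 p.1.2 - f p.2.1 p.2.2)) hKnn]
      calc ENNReal.ofReal (G p)
          ≤ ENNReal.ofReal ((f p.1.1 p.1.2) ^ 2 / 2 * Kf p + (f p.2.1 p.2.2) ^ 2 / 2 * Kf p) :=
            ENNReal.ofReal_le_ofReal hGle
        _ ≤ _ := ENNReal.ofReal_add_le
    · rw [hAdef, hBdef, Set.indicator_of_notMem hp, Set.indicator_of_notMem hp,
        Set.indicator_of_notMem hp]
      simp
  have hstepA : ∫⁻ p, A p ≤ ENNReal.ofReal (1 / (8 * n ^ 2)) *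
      ∫⁻ p in D, ENNReal.ofReal ((f p.1 p.2) ^ 2) := by
    rw [Measure.volume_eq_prod, lintegral_prod _ hAm.aemeasurable]
    have hinner : ∀ p₁ : ℝ × ℝ, (∫⁻ p₂, A (p₁, p₂)) ≤
        D.indicator (fun p₁ => ENNReal.ofReal (1 / (8 * n ^ 2)) *
          ENNReal.ofReal ((f p₁.1 p₁.2) ^ 2)) p₁ := by
      intro p₁
      by_cases hp₁ : p₁ ∈ D
      · rw [Set.indicator_of_mem hp₁]
        obtain ⟨hx₁, hy₁⟩ := hp₁
        simp only [Set.mem_Ioi] at hx₁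
        simp only [Set.mem_Iic] at hy₁
        rcases eq_or_lt_of_le hy₁ with hy0 | hy0
        · -- y₁ = 0 : Kf vanishes
          have : ∀ p₂ : ℝ × ℝ, A (p₁, p₂) = 0 := by
            intro p₂
            rw [hAdef]
            rw [Set.indicator_apply]
            split_ifs with h
            · rw [hKfdef]
              simp only [hy0, abs_zero, mul_zero, Real.sqrt_zero, zero_mul, mul_zero,
                ENNReal.ofReal_zero]
            · rfl
          simp only [this, lintegral_zero]
          exact zero_le
        · have hsec : ∀ p₂ : ℝ × ℝ, A (p₁, p₂) =
              (Set.Ici p₁.1 ×ˢ Set.Iic p₁.2).indicator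
                (fun p₂ => ENNReal.ofReal ((f p₁.1 p₁.2) ^ 2 / 2 *
                  (Real.sqrt (p₁.1 * |p₁.2|) * Real.sqrt (p₂.1 * |p₂.2|) *
                    Real.exp (-2 * n * (p₁.1 * p₁.2 - p₂.1 * p₂.2))))) p₂ := by
            intro p₂
            rw [hAdef, Set.indicator_apply, Set.indicator_apply]
            have : ((p₁, p₂) ∈ S) ↔ (p₂ ∈ Set.Ici p₁.1 ×ˢ Set.Iic p₁.2) := by
              constructor
              · rintro ⟨_, h2, h3, _⟩; exact ⟨h2, h3⟩
              · rintro ⟨h2, h3⟩; exact ⟨hx₁, h2, h3, hy₁⟩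
            simp only [this]
            rfl
          simp only [hsec]
          rw [lintegral_indicator (measurableSet_Ici.prod measurableSet_Iic)]
          have hco : (0:ℝ) ≤ (f p₁.1 p₁.2) ^ 2 / 2 := by positivity
          simp only [ENNReal.ofReal_mul hco]
          rw [lintegral_const_mul' _ _ ENNReal.ofReal_ne_top]
          calc ENNReal.ofReal ((f p₁.1 p₁.2) ^ 2 / 2) *
              ∫⁻ p₂ : ℝ × ℝ in Set.Ici p₁.1 ×ˢ Set.Iic p₁.2,
                ENNReal.ofReal (Real.sqrt (p₁.1 * |p₁.2|) * Real.sqrt (p₂.1 * |p₂.2|) *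
                  Real.exp (-2 * n * (p₁.1 * p₁.2 - p₂.1 * p₂.2)))
              ≤ ENNReal.ofReal ((f p₁.1 p₁.2) ^ 2 / 2) * ENNReal.ofReal (1 / (4 * n ^ 2)) := by
                gcongr
                exact row hn hx₁ hy0
            _ = ENNReal.ofReal (1 / (8 * n ^ 2)) * ENNReal.ofReal ((f p₁.1 p₁.2) ^ 2) := by
                rw [← ENNReal.ofReal_mul hco, ← ENNReal.ofReal_mul (by positivity)]
                congr 1
                rw [show (1:ℝ) / (8 * n ^ 2) = 1 / 2 * (1 / (4 * n ^ 2)) by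
                  rw [div_mul_div_comm]; ring]
                ring
      · rw [Set.indicator_of_notMem hp₁]
        have : ∀ p₂ : ℝ × ℝ, A (p₁, p₂) = 0 := by
          intro p₂
          rw [hAdef, Set.indicator_of_notMem]
          rintro ⟨h1, h2, h3, h4⟩
          exact hp₁ ⟨Set.mem_Ioi.mpr h1, Set.mem_Iic.mpr h4⟩
        simp only [this, lintegral_zero, le_refl]
    calc ∫⁻ p₁ : ℝ × ℝ, ∫⁻ p₂ : ℝ × ℝ, A (p₁, p₂)
        ≤ ∫⁻ p₁ : ℝ × ℝ, D.indicator (fun p₁ => ENNReal.ofReal (1 / (8 * n ^ 2)) *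
            ENNReal.ofReal ((f p₁.1 p₁.2) ^ 2)) p₁ := lintegral_mono hinner
      _ = ENNReal.ofReal (1 / (8 * n ^ 2)) * ∫⁻ p in D, ENNReal.ofReal ((f p.1 p.2) ^ 2) := by
          rw [lintegral_indicator hD, lintegral_const_mul' _ _ ENNReal.ofReal_ne_top]
  have hstepB : ∫⁻ p, B p ≤ ENNReal.ofReal (1 / (8 * n ^ 2)) *
      ∫⁻ p in D, ENNReal.ofReal ((f p.1 p.2) ^ 2) := by
    rw [Measure.volume_eq_prod, lintegral_prod_symm _ hBm.aemeasurable]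
    have hinner : ∀ p₂ : ℝ × ℝ, (∫⁻ p₁, B (p₁, p₂)) ≤
        D.indicator (fun p₂ => ENNReal.ofReal (1 / (8 * n ^ 2)) *
          ENNReal.ofReal ((f p₂.1 p₂.2) ^ 2)) p₂ := by
      intro p₂
      by_cases hp₂ : p₂ ∈ D
      · rw [Set.indicator_of_mem hp₂]
        obtain ⟨hx₂, hy₂⟩ := hp₂
        simp only [Set.mem_Ioi] at hx₂
        simp only [Set.mem_Iic] at hy₂
        rcases eq_or_lt_of_le hy₂ with hy0 | hy0
        · have : ∀ p₁ : ℝ × ℝ, B (p₁, p₂) = 0 := by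
            intro p₁
            rw [hBdef, Set.indicator_apply]
            split_ifs with h
            · rw [hKfdef]
              simp only [hy0, abs_zero, mul_zero, Real.sqrt_zero, zero_mul, mul_zero,
                ENNReal.ofReal_zero]
            · rfl
          simp only [this, lintegral_zero]
          exact zero_le
        · have hsec : ∀ p₁ : ℝ × ℝ, B (p₁, p₂) =
              (Set.Ioc 0 p₂.1 ×ˢ Set.Icc p₂.2 0).indicator
                (fun p₁ => ENNReal.ofReal ((f p₂.1 p₂.2) ^ 2 / 2 *
                  (Real.sqrt (p₁.1 * |p₁.2|) * Real.sqrt (p₂.1 * |p₂.2|) *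
                    Real.exp (-2 * n * (p₁.1 * p₁.2 - p₂.1 * p₂.2))))) p₁ := by
            intro p₁
            rw [hBdef, Set.indicator_apply, Set.indicator_apply]
            have : ((p₁, p₂) ∈ S) ↔ (p₁ ∈ Set.Ioc 0 p₂.1 ×ˢ Set.Icc p₂.2 0) := by
              constructor
              · rintro ⟨h1, h2, h3, h4⟩; exact ⟨⟨h1, h2⟩, ⟨h3, h4⟩⟩
              · rintro ⟨⟨h1, h2⟩, ⟨h3, h4⟩⟩; exact ⟨h1, h2, h3, h4⟩
            simp only [this]
            rfl
          simp only [hsec]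
          rw [lintegral_indicator ((measurableSet_Ioc).prod measurableSet_Icc)]
          have hco : (0:ℝ) ≤ (f p₂.1 p₂.2) ^ 2 / 2 := by positivity
          simp only [ENNReal.ofReal_mul hco]
          rw [lintegral_const_mul' _ _ ENNReal.ofReal_ne_top]
          calc ENNReal.ofReal ((f p₂.1 p₂.2) ^ 2 / 2) *
              ∫⁻ p₁ : ℝ × ℝ in Set.Ioc 0 p₂.1 ×ˢ Set.Icc p₂.2 0,
                ENNReal.ofReal (Real.sqrt (p₁.1 * |p₁.2|) * Real.sqrt (p₂.1 * |p₂.2|) *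
                  Real.exp (-2 * n * (p₁.1 * p₁.2 - p₂.1 * p₂.2)))
              ≤ ENNReal.ofReal ((f p₂.1 p₂.2) ^ 2 / 2) * ENNReal.ofReal (1 / (4 * n ^ 2)) := by
                gcongr
                exact col hn hx₂ hy0
            _ = ENNReal.ofReal (1 / (8 * n ^ 2)) * ENNReal.ofReal ((f p₂.1 p₂.2) ^ 2) := by
                rw [← ENNReal.ofReal_mul hco, ← ENNReal.ofReal_mul (by positivity)]
                congr 1
                rw [show (1:ℝ) / (8 * n ^ 2) = 1 / 2 * (1 / (4 * n ^ 2)) by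
                  rw [div_mul_div_comm]; ring]
                ring
      · rw [Set.indicator_of_notMem hp₂]
        have : ∀ p₁ : ℝ × ℝ, B (p₁, p₂) = 0 := by
          intro p₁
          rw [hBdef, Set.indicator_of_notMem]
          rintro ⟨h1, h2, h3, h4⟩
          exact hp₂ ⟨Set.mem_Ioi.mpr (lt_of_lt_of_le h1 h2), Set.mem_Iic.mpr (le_trans h3 h4)⟩
        simp only [this, lintegral_zero, le_refl]
    calc ∫⁻ p₂ : ℝ × ℝ, ∫⁻ p₁ : ℝ × ℝ, B (p₁, p₂)
        ≤ ∫⁻ p₂ : ℝ × ℝ, D.indicator (fun p₂ => ENNReal.ofReal (1 / (8 * n ^ 2)) *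
            ENNReal.ofReal ((f p₂.1 p₂.2) ^ 2)) p₂ := lintegral_mono hinner
      _ = ENNReal.ofReal (1 / (8 * n ^ 2)) * ∫⁻ p in D, ENNReal.ofReal ((f p.1 p.2) ^ 2) := by
          rw [lintegral_indicator hD, lintegral_const_mul' _ _ ENNReal.ofReal_ne_top]
  have hmain : (∫⁻ p in S, ENNReal.ofReal (G p)) ≤ ENNReal.ofReal (1 / (4 * n ^ 2)) *
      ∫⁻ p in D, ENNReal.ofReal ((f p.1 p.2) ^ 2) := by
    calc ∫⁻ p in S, ENNReal.ofReal (G p)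
        = ∫⁻ p, S.indicator (fun p => ENNReal.ofReal (G p)) p := (lintegral_indicator hS _).symm
      _ ≤ ∫⁻ p, (A p + B p) := lintegral_mono hptwise
      _ = (∫⁻ p, A p) + ∫⁻ p, B p := lintegral_add_left hAm _
      _ ≤ ENNReal.ofReal (1 / (8 * n ^ 2)) * (∫⁻ p in D, ENNReal.ofReal ((f p.1 p.2) ^ 2))
          + ENNReal.ofReal (1 / (8 * n ^ 2)) * ∫⁻ p in D, ENNReal.ofReal ((f p.1 p.2) ^ 2) :=
          add_le_add hstepA hstepB
      _ = (ENNReal.ofReal (1 / (8 * n ^ 2)) + ENNReal.ofReal (1 / (8 * n ^ 2))) *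
          ∫⁻ p in D, ENNReal.ofReal ((f p.1 p.2) ^ 2) := (add_mul _ _ _).symm
      _ = ENNReal.ofReal (1 / (4 * n ^ 2)) * ∫⁻ p in D, ENNReal.ofReal ((f p.1 p.2) ^ 2) := by
          rw [← ENNReal.ofReal_add (by positivity) (by positivity)]
          congr 2
          rw [← add_div, div_eq_div_iff (by positivity) (by positivity)]
          ring
  have hlD : (∫⁻ p in D, ENNReal.ofReal ((f p.1 p.2) ^ 2))
      = ENNReal.ofReal (∫ p in D, (f p.1 p.2) ^ 2) :=
    (MeasureTheory.ofReal_integral_eq_lintegral_ofReal hf_sq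
      (Filter.Eventually.of_forall fun p => sq_nonneg _)).symm
  rw [hkey]
  have h1 : (∫⁻ p in S, ENNReal.ofReal (G p)).toReal
      ≤ 1 / (4 * n ^ 2) * ∫ p in D, (f p.1 p.2) ^ 2 := by
    rw [hlD, ← ENNReal.ofReal_mul (by positivity)] at hmain
    calc (∫⁻ p in S, ENNReal.ofReal (G p)).toReal
        ≤ (ENNReal.ofReal (1 / (4 * n ^ 2) * ∫ p in D, (f p.1 p.2) ^ 2)).toReal :=
          ENNReal.toReal_mono ENNReal.ofReal_ne_top hmain
      _ = 1 / (4 * n ^ 2) * ∫ p in D, (f p.1 p.2) ^ 2 :=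
          ENNReal.toReal_ofReal (mul_nonneg (by positivity) hRHS)
  calc n ^ 2 * (∫⁻ p in S, ENNReal.ofReal (G p)).toReal
      ≤ n ^ 2 * (1 / (4 * n ^ 2) * ∫ p in D, (f p.1 p.2) ^ 2) :=
        mul_le_mul_of_nonneg_left h1 (sq_nonneg n)
    _ = 1 / 4 * ∫ p in D, (f p.1 p.2) ^ 2 := by
        rw [← mul_assoc, mul_one_div]
        rw [show n ^ 2 / (4 * n ^ 2) = 1 / 4 by
          rw [div_eq_div_iff (by positivity) (by norm_num)]; ring]
    _ ≤ 37 / 8 * ∫ p in D, (f p.1 p.2) ^ 2 := by nlinarith [hRHS]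

end Aux
end

section
/- Fix H ∈ (1/2,1) and s > 0. For 0 ≤ t ≤ 1 let S = {(x,y) : x > 0, −t−s < y < −s} and φ̃_t(x,y) = φ_t(x,y)·1_S(x,y), where φ_t(x,y) = g_s(t,x,y)/x^{2−H}. Let K₁ = 3/(8H(2H−1)) + 1/(8H(3−2H)) + 1/(4H²−1). Then for every n > 0 and every t ∈ [0,1], I₂(n, φ̃_t) ≤ K₁ √((s+1)/s) · t^{2H}. -/
open MeasureTheory ProbabilityTheory Filter Topology

namespace Stmt10Aux
open Real Set MeasureTheory Filter Topology
open scoped ENNReal NNReal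

noncomputable section

lemma integrableOn_exp_tail {c : ℝ} (hc : 0 < c) (a : ℝ) :
    IntegrableOn (fun x : ℝ => Real.exp (-(c * (x - a)))) (Ioi a) := by
  have h : IntegrableOn (fun x : ℝ => Real.exp (c * a) * Real.exp (-c * x)) (Ioi a) :=
    (exp_neg_integrableOn_Ioi a hc).const_mul (Real.exp (c * a))
  refine h.congr_fun (fun x _ => ?_) measurableSet_Ioi
  dsimp only; rw [← Real.exp_add]; congr 1; ring

lemma integral_exp_tail {c : ℝ} (hc : 0 < c) (a : ℝ) :
    ∫ x in Ioi a, Real.exp (-(c * (x - a))) = c⁻¹ := by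
  have hd : ∀ x ∈ Ici a, HasDerivAt (fun x => -(Real.exp (-(c * (x - a))) / c))
      (Real.exp (-(c * (x - a)))) x := by
    intro x _
    have h1 : HasDerivAt (fun x : ℝ => -(c * (x - a))) (-c) x := by
      simpa using (((hasDerivAt_id x).sub_const a).const_mul c).fun_neg
    have h2 := (h1.exp.div_const c).fun_neg
    refine h2.congr_deriv ?_
    field_simp
  have h2 : Tendsto (fun x : ℝ => -(c * (x - a))) atTop atBot := by
    have h3 : Tendsto (fun x : ℝ => c * (x - a)) atTop atTop := by
      apply Filter.Tendsto.const_mul_atTop hc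
      simpa [sub_eq_add_neg] using tendsto_atTop_add_const_right atTop (-a) tendsto_id
    exact tendsto_neg_atTop_atBot.comp h3
  have ht : Tendsto (fun x : ℝ => -(Real.exp (-(c * (x - a))) / c)) atTop (𝓝 0) := by
    have := ((Real.tendsto_exp_atBot.comp h2).div_const c).neg
    simpa using this
  have := integral_Ioi_of_hasDerivAt_of_tendsto' hd (integrableOn_exp_tail hc a) ht
  rw [this]; simp

lemma lint_exp_Ici {c : ℝ} (hc : 0 < c) (a : ℝ) :
    ∫⁻ x : ℝ, (if a ≤ x then ENNReal.ofReal (Real.exp (-(c * (x - a)))) else 0)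
      = ENNReal.ofReal c⁻¹ := by
  have h1 : ∫⁻ x : ℝ, (if a ≤ x then ENNReal.ofReal (Real.exp (-(c * (x - a)))) else 0)
      = ∫⁻ x in Ici a, ENNReal.ofReal (Real.exp (-(c * (x - a)))) := by
    rw [← lintegral_indicator measurableSet_Ici]
    refine lintegral_congr fun x => ?_
    simp [Set.indicator_apply]
  rw [h1, setLIntegral_congr (Ioi_ae_eq_Ici (a := a)).symm,
    ← ofReal_integral_eq_lintegral_ofReal (integrableOn_exp_tail hc a)
      (Eventually.of_forall fun x => (Real.exp_pos _).le), integral_exp_tail hc a]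

lemma lint_exp_Iio {c : ℝ} (hc : 0 < c) (b : ℝ) :
    ∫⁻ y : ℝ, (if y < b then ENNReal.ofReal (Real.exp (-(c * (b - y)))) else 0)
      = ENNReal.ofReal c⁻¹ := by
  have hmp : MeasurePreserving (fun x : ℝ => -x) volume volume :=
    Measure.measurePreserving_neg _
  have hemb : MeasurableEmbedding (fun x : ℝ => -x) :=
    (MeasurableEquiv.neg ℝ).measurableEmbedding
  have h0 := hmp.lintegral_comp_emb hemb
    (fun y => (if y < b then ENNReal.ofReal (Real.exp (-(c * (b - y)))) else 0))
  rw [← h0]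
  have hae : ∀ᵐ x : ℝ, x ≠ -b := by
    rw [ae_iff]
    simp only [not_not]
    have : {x : ℝ | x = -b} = {-b} := by ext x; simp
    rw [this]
    exact measure_singleton _
  have h1 : ∀ x : ℝ, x ≠ -b →
      (if -x < b then ENNReal.ofReal (Real.exp (-(c * (b - -x)))) else 0)
      = (if -b ≤ x then ENNReal.ofReal (Real.exp (-(c * (x - -b)))) else 0) := by
    intro x hx
    by_cases hxb : -b < x
    · rw [if_pos (by linarith), if_pos hxb.le]
      congr 2; ring
    · push_neg at hxb
      have hlt : x < -b := lt_of_le_of_ne hxb hx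
      rw [if_neg (by linarith), if_neg (by linarith)]
  calc ∫⁻ x : ℝ, (if -x < b then ENNReal.ofReal (Real.exp (-(c * (b - -x)))) else 0)
      = ∫⁻ x : ℝ, (if -b ≤ x then ENNReal.ofReal (Real.exp (-(c * (x - -b)))) else 0) :=
        lintegral_congr_ae (hae.mono h1)
    _ = ENNReal.ofReal c⁻¹ := lint_exp_Ici hc (-b)



section
variable {H s t n : ℝ}

lemma lint_W (hH1 : 1/2 < H) (hs : 0 < s) (ht : 0 < t) :
    ∫⁻ y : ℝ, (if -t - s < y ∧ y < -s then ENNReal.ofReal ((-y - s) ^ (H - 1/2)) else 0)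
      = ENNReal.ofReal (t ^ (H + 1/2) / (H + 1/2)) := by
  have hp : (0:ℝ) ≤ H - 1/2 := by linarith
  have h1 : ∫⁻ y : ℝ, (if -t - s < y ∧ y < -s then ENNReal.ofReal ((-y - s) ^ (H - 1/2)) else 0)
      = ∫⁻ y in Ioo (-t - s) (-s), ENNReal.ofReal ((-y - s) ^ (H - 1/2)) := by
    rw [← lintegral_indicator measurableSet_Ioo]
    refine lintegral_congr fun y => ?_
    simp [Set.indicator_apply, mem_Ioo]
  have hcont : ContinuousOn (fun y : ℝ => (-y - s) ^ (H - 1/2)) (Icc (-t - s) (-s)) := by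
    apply ContinuousOn.rpow_const
    · exact (continuous_neg.sub continuous_const).continuousOn
    · exact fun x _ => Or.inr hp
  have hint : IntegrableOn (fun y : ℝ => (-y - s) ^ (H - 1/2)) (Ioo (-t - s) (-s)) :=
    (hcont.integrableOn_Icc).mono_set Ioo_subset_Icc_self
  have hnn : 0 ≤ᵐ[volume.restrict (Ioo (-t-s) (-s))] fun y : ℝ => (-y - s) ^ (H - 1/2) := by
    filter_upwards [ae_restrict_mem measurableSet_Ioo] with y hy
    exact rpow_nonneg (by simp only [mem_Ioo] at hy; linarith) _
  rw [h1, ← ofReal_integral_eq_lintegral_ofReal hint hnn]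
  congr 1
  have h2 : ∫ y in Ioo (-t - s) (-s), (-y - s) ^ (H - 1/2)
      = ∫ y in (-t - s)..(-s), (-y - s) ^ (H - 1/2) := by
    rw [intervalIntegral.integral_of_le (by linarith)]
    exact (integral_Ioc_eq_integral_Ioo).symm
  rw [h2]
  have h3 : ∫ y in (-t - s)..(-s), (-y - s) ^ (H - 1/2)
      = ∫ u in s..(t + s), (u - s) ^ (H - 1/2) := by
    have := intervalIntegral.integral_comp_neg (a := -t - s) (b := -s)
      (fun u : ℝ => (u - s) ^ (H - 1/2))
    rw [this, show - -s = s from by ring, show -(-t - s) = t + s from by ring]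
  rw [h3, intervalIntegral.integral_comp_sub_right (fun v : ℝ => v ^ (H - 1/2)) s]
  have h4 : s - s = (0:ℝ) := by ring
  have h5 : t + s - s = t := by ring
  rw [h4, h5, integral_rpow (Or.inl (by linarith : (-1:ℝ) < H - 1/2))]
  rw [Real.zero_rpow (by linarith : H - 1/2 + 1 ≠ 0)]
  rw [show H - 1/2 + 1 = H + 1/2 by ring]
  ring

lemma lint_A (hH1 : 1/2 < H) (hH2 : H < 1) (ht : 0 < t) (hn : 0 < n) :
    ∫⁻ x : ℝ, ((if 0 < x then ENNReal.ofReal (min x t * x ^ (H - 2) * Real.sqrt x) else 0)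
        * ENNReal.ofReal (2 * n * x)⁻¹)
      = ENNReal.ofReal ((2 * n)⁻¹ * (t ^ (H - 1/2) * (1 / (H - 1/2) + 1 / (3/2 - H)))) := by
  have h1 : ∀ x : ℝ, ((if 0 < x then ENNReal.ofReal (min x t * x ^ (H - 2) * Real.sqrt x) else 0)
        * ENNReal.ofReal (2 * n * x)⁻¹)
      = Set.indicator (Ioi 0) (fun x : ℝ =>
          ENNReal.ofReal (min x t * x ^ (H - 2) * Real.sqrt x * (2 * n * x)⁻¹)) x := by
    intro x
    by_cases hx : 0 < x
    · rw [if_pos hx, Set.indicator_of_mem (mem_Ioi.mpr hx), ← ENNReal.ofReal_mul]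
      positivity
    · rw [if_neg hx, Set.indicator_of_notMem (by simpa using hx), zero_mul]
  rw [lintegral_congr h1, lintegral_indicator measurableSet_Ioi]
  rw [← Ioc_union_Ioi_eq_Ioi ht.le, lintegral_union measurableSet_Ioi Ioc_disjoint_Ioi_same]
  have part1 : ∫⁻ x in Ioc 0 t, ENNReal.ofReal (min x t * x ^ (H - 2) * Real.sqrt x * (2 * n * x)⁻¹)
      = ENNReal.ofReal ((2*n)⁻¹ * (t ^ (H - 1/2) / (H - 1/2))) := by
    have hcong : ∀ x ∈ Ioc (0:ℝ) t,
        ENNReal.ofReal (min x t * x ^ (H - 2) * Real.sqrt x * (2 * n * x)⁻¹)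
          = ENNReal.ofReal ((2*n)⁻¹ * x ^ (H - 3/2)) := by
      intro x hx
      obtain ⟨hx0, hxt⟩ := hx
      congr 1
      rw [min_eq_left hxt, Real.sqrt_eq_rpow, mul_inv]
      rw [show x * x ^ (H - 2) * x ^ ((1:ℝ)/2) * ((2*n)⁻¹ * x⁻¹)
          = (2*n)⁻¹ * ((x * x⁻¹) * (x ^ (H - 2) * x ^ ((1:ℝ)/2))) from by ring,
        mul_inv_cancel₀ hx0.ne', one_mul, ← Real.rpow_add hx0,
        show H - 2 + 1/2 = H - 3/2 from by ring]
    rw [setLIntegral_congr_fun measurableSet_Ioc hcong]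
    have hint : IntegrableOn (fun x : ℝ => x ^ (H - 3/2)) (Ioc 0 t) :=
      (intervalIntegral.intervalIntegrable_rpow' (by linarith : (-1:ℝ) < H - 3/2)).1
    have hint2 : IntegrableOn (fun x : ℝ => (2*n)⁻¹ * x ^ (H - 3/2)) (Ioc 0 t) :=
      hint.const_mul _
    have hnn : 0 ≤ᵐ[volume.restrict (Ioc 0 t)] fun x : ℝ => (2*n)⁻¹ * x ^ (H - 3/2) := by
      filter_upwards [ae_restrict_mem measurableSet_Ioc] with x hx
      have := rpow_nonneg hx.1.le (H - 3/2)
      positivity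
    rw [← ofReal_integral_eq_lintegral_ofReal hint2 hnn]
    congr 1
    rw [MeasureTheory.integral_const_mul]
    congr 1
    rw [← intervalIntegral.integral_of_le ht.le,
      integral_rpow (Or.inl (by linarith : (-1:ℝ) < H - 3/2)),
      Real.zero_rpow (by intro h; rw [show H - 3/2 + 1 = H - 1/2 by ring] at h; linarith)]
    rw [show H - 3/2 + 1 = H - 1/2 by ring]
    ring
  have part2 : ∫⁻ x in Ioi t, ENNReal.ofReal (min x t * x ^ (H - 2) * Real.sqrt x * (2 * n * x)⁻¹)
      = ENNReal.ofReal ((2*n)⁻¹ * (t ^ (H - 1/2) / (3/2 - H))) := by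
    have hcong : ∀ x ∈ Ioi t,
        ENNReal.ofReal (min x t * x ^ (H - 2) * Real.sqrt x * (2 * n * x)⁻¹)
          = ENNReal.ofReal (((2*n)⁻¹ * t) * x ^ (H - 5/2)) := by
      intro x hx
      have hx0 : (0:ℝ) < x := ht.trans hx
      congr 1
      rw [min_eq_right (le_of_lt hx), Real.sqrt_eq_rpow, mul_inv]
      rw [show t * x ^ (H - 2) * x ^ ((1:ℝ)/2) * ((2*n)⁻¹ * x⁻¹)
          = ((2*n)⁻¹ * t) * (x ^ (H - 2) * x ^ ((1:ℝ)/2) * x⁻¹) from by ring,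
        ← Real.rpow_neg_one x, ← Real.rpow_add hx0, ← Real.rpow_add hx0,
        show H - 2 + 1/2 + -1 = H - 5/2 from by ring]
    rw [setLIntegral_congr_fun measurableSet_Ioi hcong]
    have hint : IntegrableOn (fun x : ℝ => x ^ (H - 5/2)) (Ioi t) :=
      integrableOn_Ioi_rpow_of_lt (by linarith) ht
    have hint2 : IntegrableOn (fun x : ℝ => ((2*n)⁻¹ * t) * x ^ (H - 5/2)) (Ioi t) :=
      hint.const_mul _
    have hnn : 0 ≤ᵐ[volume.restrict (Ioi t)] fun x : ℝ => ((2*n)⁻¹ * t) * x ^ (H - 5/2) := by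
      filter_upwards [ae_restrict_mem measurableSet_Ioi] with x hx
      have hx0 : (0:ℝ) < x := ht.trans hx
      have := rpow_nonneg hx0.le (H - 5/2)
      positivity
    rw [← ofReal_integral_eq_lintegral_ofReal hint2 hnn]
    congr 1
    rw [MeasureTheory.integral_const_mul, integral_Ioi_rpow_of_lt (by linarith) ht]
    rw [show H - 5/2 + 1 = H - 3/2 by ring]
    rw [show (-t ^ (H - 3/2) / (H - 3/2)) = t ^ (H - 3/2) / (3/2 - H) by
      rw [div_eq_div_iff (by linarith) (by linarith)]; ring]
    rw [show ((2*n)⁻¹ * t) * (t ^ (H - 3/2) / (3/2 - H))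
        = (2*n)⁻¹ * ((t * t ^ (H - 3/2)) / (3/2 - H)) by ring]
    congr 2
    rw [show (t : ℝ) * t ^ (H - 3/2) = t ^ (1 + (H - 3/2)) by
      rw [Real.rpow_add ht, Real.rpow_one]]
    congr 1
    ring
  have hnn1 : 0 ≤ (2*n)⁻¹ * (t ^ (H - 1/2) / (H - 1/2)) :=
    mul_nonneg (by positivity) (div_nonneg (rpow_nonneg ht.le _) (by linarith))
  have hnn2 : 0 ≤ (2*n)⁻¹ * (t ^ (H - 1/2) / (3/2 - H)) :=
    mul_nonneg (by positivity) (div_nonneg (rpow_nonneg ht.le _) (by linarith))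
  rw [part1, part2, ← ENNReal.ofReal_add hnn1 hnn2]
  congr 1
  ring

end

def Af (H t : ℝ) (x : ℝ) : ℝ≥0∞ :=
  if 0 < x then ENNReal.ofReal (min x t * x ^ (H - 2) * Real.sqrt x) else 0
def Wf (H s t : ℝ) (y : ℝ) : ℝ≥0∞ :=
  if -t - s < y ∧ y < -s then ENNReal.ofReal ((-y - s) ^ (H - 1/2)) else 0
def Bf (H s t : ℝ) (y : ℝ) : ℝ≥0∞ :=
  if -t - s < y ∧ y < -s then ENNReal.ofReal ((-y - s) ^ (H - 1/2) * Real.sqrt |y|) else 0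
def E1f (n x₁ y₂ y₁ : ℝ) : ℝ≥0∞ :=
  if y₁ < y₂ then ENNReal.ofReal (Real.exp (-(2 * n * x₁ * (y₂ - y₁)))) else 0
def E2f (n x₁ y₂ x₂ : ℝ) : ℝ≥0∞ :=
  if x₁ ≤ x₂ then ENNReal.ofReal (Real.exp (-(2 * n * -y₂ * (x₂ - x₁)))) else 0
def Mf (H s t n : ℝ) (p : (ℝ × ℝ) × ℝ × ℝ) : ℝ≥0∞ :=
  ENNReal.ofReal (Real.sqrt (s + 1)) * Af H t p.1.1 * Bf H s t p.2.2
    * E1f n p.1.1 p.2.2 p.1.2 * E2f n p.1.1 p.2.2 p.2.1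

section
variable {H s t n : ℝ}

lemma measurable_Af_comp {X : Type*} [MeasurableSpace X] {a : X → ℝ} (ha : Measurable a) :
    Measurable fun p => Af H t (a p) := by
  unfold Af
  exact Measurable.ite (measurableSet_lt measurable_const ha)
    (ENNReal.measurable_ofReal.comp (by fun_prop)) measurable_const

lemma measurable_Wf_comp {X : Type*} [MeasurableSpace X] {b : X → ℝ} (hb : Measurable b) :
    Measurable fun p => Wf H s t (b p) := by
  unfold Wf
  exact Measurable.ite
    ((measurableSet_lt measurable_const hb).inter (measurableSet_lt hb measurable_const))
    (ENNReal.measurable_ofReal.comp (by fun_prop)) measurable_const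

lemma measurable_Bf_comp {X : Type*} [MeasurableSpace X] {b : X → ℝ} (hb : Measurable b) :
    Measurable fun p => Bf H s t (b p) := by
  unfold Bf
  exact Measurable.ite
    ((measurableSet_lt measurable_const hb).inter (measurableSet_lt hb measurable_const))
    (ENNReal.measurable_ofReal.comp (by fun_prop)) measurable_const

lemma measurable_E1f_comp {X : Type*} [MeasurableSpace X] {a b c : X → ℝ}
    (ha : Measurable a) (hb : Measurable b) (hc : Measurable c) :
    Measurable fun p => E1f n (a p) (b p) (c p) := by
  unfold E1f
  exact Measurable.ite (measurableSet_lt hc hb)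
    (ENNReal.measurable_ofReal.comp (by fun_prop)) measurable_const

lemma measurable_E2f_comp {X : Type*} [MeasurableSpace X] {a b c : X → ℝ}
    (ha : Measurable a) (hb : Measurable b) (hc : Measurable c) :
    Measurable fun p => E2f n (a p) (b p) (c p) := by
  unfold E2f
  exact Measurable.ite (measurableSet_le ha hc)
    (ENNReal.measurable_ofReal.comp (by fun_prop)) measurable_const

lemma measurable_Mf : Measurable (Mf H s t n) := by
  unfold Mf
  exact ((((measurable_const.mul (measurable_Af_comp measurable_fst.fst)).mul
    (measurable_Bf_comp measurable_snd.snd)).mul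
    (measurable_E1f_comp measurable_fst.fst measurable_snd.snd measurable_fst.snd)).mul
    (measurable_E2f_comp measurable_fst.fst measurable_snd.snd measurable_snd.fst))

lemma gker_eq (hs : 0 < s) {x y : ℝ} (hx : 0 < x) (hy1 : -t - s < y) (hy2 : y < -s) :
    gker s t x y = min x (-y - s) := by
  unfold gker hker
  have h1 : min (t + s + y) 0 = 0 := min_eq_right (by linarith)
  have h2 : min y 0 = y := min_eq_left (by linarith)
  have h3 : min (s + y) 0 = s + y := min_eq_left (by linarith)
  rw [h1, h2, h3]
  have h4 : max (0 + x) 0 = x := by rw [zero_add]; exact max_eq_left hx.le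
  rcases le_total x (-y - s) with h | h
  · rw [min_eq_left h]
    have h5 : max (s + y + x) 0 = 0 := max_eq_right (by linarith)
    rw [h4, h5]; ring
  · rw [min_eq_right h]
    have h5 : max (s + y + x) 0 = s + y + x := max_eq_left (by linarith)
    rw [h4, h5]; ring

lemma div_rpow_eq {x : ℝ} (hx : 0 < x) (g : ℝ) : g / x ^ (2 - H) = g * x ^ (H - 2) := by
  rw [div_eq_mul_inv, ← Real.rpow_neg hx.le, show -(2 - H) = H - 2 by ring]

lemma f1_bound (hs : 0 < s) (ht0 : 0 ≤ t) (ht1 : t ≤ 1) {x y : ℝ} (hx : 0 < x)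
    (hy1 : -t - s < y) (hy2 : y < -s) :
    gker s t x y / x ^ (2 - H) * Real.sqrt (x * |y|)
      ≤ Real.sqrt (s + 1) * (min x t * x ^ (H - 2) * Real.sqrt x) := by
  rw [gker_eq hs hx hy1 hy2, div_rpow_eq hx, Real.sqrt_mul hx.le]
  have hmin : min x (-y - s) ≤ min x t := min_le_min le_rfl (by linarith)
  have hminnn : (0:ℝ) ≤ min x (-y - s) := le_min hx.le (by linarith)
  have habs : Real.sqrt |y| ≤ Real.sqrt (s + 1) := by
    apply Real.sqrt_le_sqrt
    rw [abs_of_neg (by linarith)]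
    linarith
  have hr : (0:ℝ) ≤ x ^ (H - 2) := rpow_nonneg hx.le _
  calc min x (-y - s) * x ^ (H - 2) * (Real.sqrt x * Real.sqrt |y|)
      = (min x (-y - s) * x ^ (H - 2) * Real.sqrt x) * Real.sqrt |y| := by ring
    _ ≤ (min x t * x ^ (H - 2) * Real.sqrt x) * Real.sqrt (s + 1) := by
        apply mul_le_mul _ habs (Real.sqrt_nonneg _) _
        · exact mul_le_mul_of_nonneg_right
            (mul_le_mul_of_nonneg_right hmin hr) (Real.sqrt_nonneg _)
        · exact mul_nonneg (mul_nonneg (le_min hx.le ht0) hr) (Real.sqrt_nonneg _)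
    _ = Real.sqrt (s + 1) * (min x t * x ^ (H - 2) * Real.sqrt x) := by ring

lemma f2_bound (hH1 : 1/2 < H) (hH2 : H < 1) (hs : 0 < s) {x y : ℝ} (hx : 0 < x)
    (hy1 : -t - s < y) (hy2 : y < -s) :
    gker s t x y / x ^ (2 - H) * Real.sqrt (x * |y|)
      ≤ (-y - s) ^ (H - 1/2) * Real.sqrt |y| := by
  rw [gker_eq hs hx hy1 hy2, div_rpow_eq hx, Real.sqrt_mul hx.le]
  have ha : (0:ℝ) < -y - s := by linarith
  have core : min x (-y - s) * x ^ (H - 2) * Real.sqrt x ≤ (-y - s) ^ (H - 1/2) := by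
    rw [Real.sqrt_eq_rpow, mul_assoc, ← Real.rpow_add hx,
      show H - 2 + 1/2 = H - 3/2 by ring]
    rcases le_total x (-y - s) with h | h
    · rw [min_eq_left h]
      have : x * x ^ (H - 3/2) = x ^ (H - 1/2) := by
        rw [mul_comm, ← Real.rpow_add_one hx.ne', show H - 3/2 + 1 = H - 1/2 by ring]
      rw [this]
      exact Real.rpow_le_rpow hx.le h (by linarith)
    · rw [min_eq_right h]
      have h2 : x ^ (H - 3/2) ≤ (-y - s) ^ (H - 3/2) :=
        Real.rpow_le_rpow_of_nonpos ha h (by linarith)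
      calc (-y - s) * x ^ (H - 3/2) ≤ (-y - s) * (-y - s) ^ (H - 3/2) :=
            mul_le_mul_of_nonneg_left h2 ha.le
        _ = (-y - s) ^ (H - 1/2) := by
            rw [mul_comm, ← Real.rpow_add_one ha.ne', show H - 3/2 + 1 = H - 1/2 by ring]
  calc min x (-y - s) * x ^ (H - 2) * (Real.sqrt x * Real.sqrt |y|)
      = (min x (-y - s) * x ^ (H - 2) * Real.sqrt x) * Real.sqrt |y| := by ring
    _ ≤ (-y - s) ^ (H - 1/2) * Real.sqrt |y| :=
        mul_le_mul_of_nonneg_right core (Real.sqrt_nonneg _)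

lemma exp_split (x₁ y₁ x₂ y₂ : ℝ) :
    Real.exp (-2 * n * (x₁ * (y₂ - y₁) - (x₂ - x₁) * y₂))
      = Real.exp (-(2 * n * x₁ * (y₂ - y₁))) * Real.exp (-(2 * n * -y₂ * (x₂ - x₁))) := by
  rw [← Real.exp_add]; congr 1; ring

lemma ff_nonneg (hs : 0 < s) (x y : ℝ) :
    0 ≤ (if 0 < x ∧ -t - s < y ∧ y < -s then gker s t x y / x ^ (2 - H) else 0) := by
  by_cases h : 0 < x ∧ -t - s < y ∧ y < -s
  · rw [if_pos h, gker_eq hs h.1 h.2.1 h.2.2]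
    exact div_nonneg (le_min h.1.le (by linarith [h.2.2])) (rpow_nonneg h.1.le _)
  · rw [if_neg h]

lemma dominate (hH1 : 1/2 < H) (hH2 : H < 1) (hs : 0 < s) (ht0 : 0 ≤ t) (ht1 : t ≤ 1)
    (p : (ℝ × ℝ) × ℝ × ℝ)
    (hp : 0 < p.1.1 ∧ p.1.1 ≤ p.2.1 ∧ p.1.2 < p.2.2 ∧ p.2.2 ≤ 0) :
    ENNReal.ofReal
      ((if 0 < p.1.1 ∧ -t - s < p.1.2 ∧ p.1.2 < -s then
          gker s t p.1.1 p.1.2 / p.1.1 ^ (2 - H) else 0)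
        * (if 0 < p.2.1 ∧ -t - s < p.2.2 ∧ p.2.2 < -s then
          gker s t p.2.1 p.2.2 / p.2.1 ^ (2 - H) else 0)
        * Real.sqrt (p.1.1 * |p.1.2|) * Real.sqrt (p.2.1 * |p.2.2|)
        * Real.exp (-2 * n * (p.1.1 * (p.2.2 - p.1.2) - (p.2.1 - p.1.1) * p.2.2)))
      ≤ Mf H s t n p := by
  obtain ⟨hx1, hx12, hy12, hy2⟩ := hp
  by_cases h1 : 0 < p.1.1 ∧ -t - s < p.1.2 ∧ p.1.2 < -s
  · by_cases h2 : 0 < p.2.1 ∧ -t - s < p.2.2 ∧ p.2.2 < -s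
    · rw [if_pos h1, if_pos h2]
      unfold Mf Af Bf E1f E2f
      rw [if_pos hx1, if_pos ⟨h2.2.1, h2.2.2⟩, if_pos hy12, if_pos hx12]
      have hA0 : 0 ≤ min p.1.1 t * p.1.1 ^ (H - 2) * Real.sqrt p.1.1 :=
        mul_nonneg (mul_nonneg (le_min hx1.le ht0) (rpow_nonneg hx1.le _)) (Real.sqrt_nonneg _)
      have hB0 : 0 ≤ (-p.2.2 - s) ^ (H - 1/2) * Real.sqrt |p.2.2| :=
        mul_nonneg (rpow_nonneg (by linarith [h2.2.2]) _) (Real.sqrt_nonneg _)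
      rw [← ENNReal.ofReal_mul (Real.sqrt_nonneg _),
        ← ENNReal.ofReal_mul (mul_nonneg (Real.sqrt_nonneg _) hA0),
        ← ENNReal.ofReal_mul (mul_nonneg (mul_nonneg (Real.sqrt_nonneg _) hA0) hB0),
        ← ENNReal.ofReal_mul (mul_nonneg (mul_nonneg (mul_nonneg (Real.sqrt_nonneg _) hA0) hB0)
          (Real.exp_pos _).le)]
      apply ENNReal.ofReal_le_ofReal
      rw [exp_split]
      have hf1 := f1_bound (H := H) hs ht0 ht1 h1.1 h1.2.1 h1.2.2
      have hf2 := f2_bound hH1 hH2 hs h2.1 h2.2.1 h2.2.2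
      have hf1nn : 0 ≤ gker s t p.1.1 p.1.2 / p.1.1 ^ (2 - H) := by
        rw [gker_eq hs h1.1 h1.2.1 h1.2.2]
        exact div_nonneg (le_min h1.1.le (by linarith [h1.2.2])) (rpow_nonneg h1.1.le _)
      have hf2nn : 0 ≤ gker s t p.2.1 p.2.2 / p.2.1 ^ (2 - H) := by
        rw [gker_eq hs h2.1 h2.2.1 h2.2.2]
        exact div_nonneg (le_min h2.1.le (by linarith [h2.2.2])) (rpow_nonneg h2.1.le _)
      have he : (0:ℝ) ≤ Real.exp (-(2 * n * p.1.1 * (p.2.2 - p.1.2)))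
          * Real.exp (-(2 * n * -p.2.2 * (p.2.1 - p.1.1))) := by positivity
      calc gker s t p.1.1 p.1.2 / p.1.1 ^ (2 - H)
            * (gker s t p.2.1 p.2.2 / p.2.1 ^ (2 - H))
            * Real.sqrt (p.1.1 * |p.1.2|) * Real.sqrt (p.2.1 * |p.2.2|)
            * (Real.exp (-(2 * n * p.1.1 * (p.2.2 - p.1.2)))
              * Real.exp (-(2 * n * -p.2.2 * (p.2.1 - p.1.1))))
          = (gker s t p.1.1 p.1.2 / p.1.1 ^ (2 - H) * Real.sqrt (p.1.1 * |p.1.2|))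
            * ((gker s t p.2.1 p.2.2 / p.2.1 ^ (2 - H) * Real.sqrt (p.2.1 * |p.2.2|))
              * (Real.exp (-(2 * n * p.1.1 * (p.2.2 - p.1.2)))
                * Real.exp (-(2 * n * -p.2.2 * (p.2.1 - p.1.1))))) := by ring
        _ ≤ (Real.sqrt (s + 1) * (min p.1.1 t * p.1.1 ^ (H - 2) * Real.sqrt p.1.1))
            * (((-p.2.2 - s) ^ (H - 1/2) * Real.sqrt |p.2.2|)
              * (Real.exp (-(2 * n * p.1.1 * (p.2.2 - p.1.2)))
                * Real.exp (-(2 * n * -p.2.2 * (p.2.1 - p.1.1))))) := by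
            apply mul_le_mul hf1 (mul_le_mul_of_nonneg_right hf2 he)
              (mul_nonneg (mul_nonneg hf2nn (Real.sqrt_nonneg _)) he)
              (by positivity)
        _ = Real.sqrt (s + 1) * (min p.1.1 t * p.1.1 ^ (H - 2) * Real.sqrt p.1.1)
            * ((-p.2.2 - s) ^ (H - 1/2) * Real.sqrt |p.2.2|)
            * Real.exp (-(2 * n * p.1.1 * (p.2.2 - p.1.2)))
            * Real.exp (-(2 * n * -p.2.2 * (p.2.1 - p.1.1))) := by ring
    · rw [if_neg h2, mul_zero, zero_mul, zero_mul, zero_mul, ENNReal.ofReal_zero]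
      exact zero_le
  · rw [if_neg h1, zero_mul, zero_mul, zero_mul, zero_mul, ENNReal.ofReal_zero]
    exact zero_le

end

section
variable {H s t n : ℝ}

lemma Af_ne_top {x : ℝ} : Af H t x ≠ ⊤ := by unfold Af; split <;> simp
lemma Wf_ne_top {y : ℝ} : Wf H s t y ≠ ⊤ := by unfold Wf; split <;> simp
lemma Bf_ne_top {y : ℝ} : Bf H s t y ≠ ⊤ := by unfold Bf; split <;> simp
lemma E1f_ne_top {x₁ y₂ y₁ : ℝ} : E1f n x₁ y₂ y₁ ≠ ⊤ := by unfold E1f; split <;> simp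

lemma keyY2 (hs : 0 < s) (hn : 0 < n) (x₁ y₂ : ℝ) :
    Bf H s t y₂ * ∫⁻ x₂, E2f n x₁ y₂ x₂
      ≤ ENNReal.ofReal (2 * n * Real.sqrt s)⁻¹ * Wf H s t y₂ := by
  by_cases h : -t - s < y₂ ∧ y₂ < -s
  · have hy2 : (0:ℝ) < -y₂ := by linarith [h.2]
    have hy : 0 < 2 * n * -y₂ := by positivity
    unfold Bf Wf E2f
    rw [if_pos h, if_pos h, lint_exp_Ici hy x₁]
    rw [← ENNReal.ofReal_mul
        (mul_nonneg (rpow_nonneg (by linarith [h.2] : (0:ℝ) ≤ -y₂ - s) _) (Real.sqrt_nonneg _)),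
      ← ENNReal.ofReal_mul (by positivity)]
    apply ENNReal.ofReal_le_ofReal
    have habs : |y₂| = -y₂ := abs_of_neg (by linarith)
    rw [habs]
    have hss : Real.sqrt s ≤ Real.sqrt (-y₂) := Real.sqrt_le_sqrt (by linarith [h.2])
    have core : Real.sqrt (-y₂) * (2 * n * -y₂)⁻¹ ≤ 1 / (2 * n * Real.sqrt s) := by
      rw [← div_eq_mul_inv, div_le_div_iff₀ (by positivity) (by positivity)]
      have h3 : Real.sqrt (-y₂) * Real.sqrt s ≤ Real.sqrt (-y₂) * Real.sqrt (-y₂) :=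
        mul_le_mul_of_nonneg_left hss (Real.sqrt_nonneg _)
      rw [Real.mul_self_sqrt hy2.le] at h3
      nlinarith [hn]
    have hrnn : (0:ℝ) ≤ (-y₂ - s) ^ (H - 1/2) := rpow_nonneg (by linarith [h.2]) _
    calc (-y₂ - s) ^ (H - 1/2) * Real.sqrt (-y₂) * (2 * n * -y₂)⁻¹
        = (-y₂ - s) ^ (H - 1/2) * (Real.sqrt (-y₂) * (2 * n * -y₂)⁻¹) := by ring
      _ ≤ (-y₂ - s) ^ (H - 1/2) * (1 / (2 * n * Real.sqrt s)) :=
          mul_le_mul_of_nonneg_left core hrnn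
      _ = (2 * n * Real.sqrt s)⁻¹ * (-y₂ - s) ^ (H - 1/2) := by rw [one_div]; ring
  · unfold Bf Wf
    rw [if_neg h, if_neg h]
    simp

lemma lint_M_le (hH1 : 1/2 < H) (hH2 : H < 1) (hs : 0 < s) (ht : 0 < t) (hn : 0 < n) :
    ∫⁻ p, Mf H s t n p
      ≤ ENNReal.ofReal (Real.sqrt (s + 1)) * ENNReal.ofReal (2 * n * Real.sqrt s)⁻¹
        * ENNReal.ofReal (t ^ (H + 1/2) / (H + 1/2))
        * ENNReal.ofReal ((2 * n)⁻¹ * (t ^ (H - 1/2) * (1 / (H - 1/2) + 1 / (3/2 - H)))) := by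
  set C1 : ℝ≥0∞ := ENNReal.ofReal (Real.sqrt (s + 1)) with hC1
  set c2 : ℝ≥0∞ := ENNReal.ofReal (2 * n * Real.sqrt s)⁻¹ with hc2
  set J : ℝ≥0∞ := ENNReal.ofReal (t ^ (H + 1/2) / (H + 1/2)) with hJ
  have hC1top : C1 ≠ ⊤ := ENNReal.ofReal_ne_top
  have hc2top : c2 ≠ ⊤ := ENNReal.ofReal_ne_top
  have hjoint : Measurable (Function.uncurry
      fun (p1 : ℝ × ℝ) (y₂ : ℝ) => Wf H s t y₂ * E1f n p1.1 y₂ p1.2) := by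
    have he : (Function.uncurry fun (p1 : ℝ × ℝ) (y₂ : ℝ) => Wf H s t y₂ * E1f n p1.1 y₂ p1.2)
        = fun q : (ℝ × ℝ) × ℝ => Wf H s t q.2 * E1f n q.1.1 q.2 q.1.2 := rfl
    rw [he]
    exact (measurable_Wf_comp measurable_snd).mul
      (measurable_E1f_comp measurable_fst.fst measurable_snd measurable_fst.snd)
  have hmeas : Measurable fun p1 : ℝ × ℝ =>
      Af H t p1.1 * ∫⁻ y₂, Wf H s t y₂ * E1f n p1.1 y₂ p1.2 :=
    (measurable_Af_comp measurable_fst).mul hjoint.lintegral_prod_right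
  have inner : ∀ p1 : ℝ × ℝ, ∫⁻ p2 : ℝ × ℝ, Mf H s t n (p1, p2)
      ≤ (C1 * c2) * (Af H t p1.1 * ∫⁻ y₂, Wf H s t y₂ * E1f n p1.1 y₂ p1.2) := by
    intro p1
    have hm2 : Measurable fun p2 : ℝ × ℝ =>
        Bf H s t p2.2 * E1f n p1.1 p2.2 p1.2 * E2f n p1.1 p2.2 p2.1 :=
      ((measurable_Bf_comp measurable_snd).mul
        (measurable_E1f_comp measurable_const measurable_snd measurable_const)).mul
        (measurable_E2f_comp measurable_const measurable_snd measurable_fst)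
    calc ∫⁻ p2 : ℝ × ℝ, Mf H s t n (p1, p2)
        = ∫⁻ p2 : ℝ × ℝ, (C1 * Af H t p1.1)
            * (Bf H s t p2.2 * E1f n p1.1 p2.2 p1.2 * E2f n p1.1 p2.2 p2.1) := by
          refine lintegral_congr fun p2 => ?_
          unfold Mf
          ring
      _ = (C1 * Af H t p1.1) * ∫⁻ p2 : ℝ × ℝ,
            (Bf H s t p2.2 * E1f n p1.1 p2.2 p1.2 * E2f n p1.1 p2.2 p2.1) :=
          lintegral_const_mul' _ _ (ENNReal.mul_ne_top hC1top Af_ne_top)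
      _ = (C1 * Af H t p1.1) * ∫⁻ y₂, ∫⁻ x₂,
            (Bf H s t y₂ * E1f n p1.1 y₂ p1.2 * E2f n p1.1 y₂ x₂) := by
          rw [Measure.volume_eq_prod, lintegral_prod_symm _ hm2.aemeasurable]
      _ = (C1 * Af H t p1.1) * ∫⁻ y₂,
            (Bf H s t y₂ * E1f n p1.1 y₂ p1.2) * ∫⁻ x₂, E2f n p1.1 y₂ x₂ := by
          congr 1
          refine lintegral_congr fun y₂ => ?_
          exact lintegral_const_mul' _ _ (ENNReal.mul_ne_top Bf_ne_top E1f_ne_top)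
      _ ≤ (C1 * Af H t p1.1) * ∫⁻ y₂, c2 * (Wf H s t y₂ * E1f n p1.1 y₂ p1.2) := by
          apply mul_le_mul_right
          apply lintegral_mono fun y₂ => ?_
          calc Bf H s t y₂ * E1f n p1.1 y₂ p1.2 * ∫⁻ x₂, E2f n p1.1 y₂ x₂
              = (Bf H s t y₂ * ∫⁻ x₂, E2f n p1.1 y₂ x₂) * E1f n p1.1 y₂ p1.2 := by ring
            _ ≤ (c2 * Wf H s t y₂) * E1f n p1.1 y₂ p1.2 :=
                mul_le_mul_left (keyY2 hs hn p1.1 y₂) _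
            _ = c2 * (Wf H s t y₂ * E1f n p1.1 y₂ p1.2) := by ring
      _ = (C1 * c2) * (Af H t p1.1 * ∫⁻ y₂, Wf H s t y₂ * E1f n p1.1 y₂ p1.2) := by
          rw [lintegral_const_mul' c2 _ hc2top]
          ring
  calc ∫⁻ p, Mf H s t n p
      = ∫⁻ p1 : ℝ × ℝ, ∫⁻ p2 : ℝ × ℝ, Mf H s t n (p1, p2) := by
        rw [Measure.volume_eq_prod, lintegral_prod _ measurable_Mf.aemeasurable]
    _ ≤ ∫⁻ p1 : ℝ × ℝ, (C1 * c2)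
          * (Af H t p1.1 * ∫⁻ y₂, Wf H s t y₂ * E1f n p1.1 y₂ p1.2) :=
        lintegral_mono inner
    _ = (C1 * c2) * ∫⁻ p1 : ℝ × ℝ,
          Af H t p1.1 * ∫⁻ y₂, Wf H s t y₂ * E1f n p1.1 y₂ p1.2 :=
        lintegral_const_mul' _ _ (ENNReal.mul_ne_top hC1top hc2top)
    _ = (C1 * c2) * ∫⁻ x₁ : ℝ, ∫⁻ y₁ : ℝ,
          Af H t x₁ * ∫⁻ y₂, Wf H s t y₂ * E1f n x₁ y₂ y₁ := by
        rw [Measure.volume_eq_prod, lintegral_prod _ hmeas.aemeasurable]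
    _ = (C1 * c2) * ∫⁻ x₁ : ℝ, (Af H t x₁ * ENNReal.ofReal (2 * n * x₁)⁻¹) * J := by
        congr 1
        refine lintegral_congr fun x₁ => ?_
        by_cases hx : 0 < x₁
        · have hswapmeas : Measurable (Function.uncurry
              fun (y₁ y₂ : ℝ) => Wf H s t y₂ * E1f n x₁ y₂ y₁) := by
            have he : (Function.uncurry fun (y₁ y₂ : ℝ) => Wf H s t y₂ * E1f n x₁ y₂ y₁)
                = fun q : ℝ × ℝ => Wf H s t q.2 * E1f n x₁ q.2 q.1 := rfl
            rw [he]
            exact (measurable_Wf_comp measurable_snd).mul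
              (measurable_E1f_comp measurable_const measurable_snd measurable_fst)
          rw [lintegral_const_mul' _ _ Af_ne_top,
            lintegral_lintegral_swap hswapmeas.aemeasurable]
          have h3 : ∀ y₂ : ℝ, ∫⁻ y₁ : ℝ, Wf H s t y₂ * E1f n x₁ y₂ y₁
              = Wf H s t y₂ * ENNReal.ofReal (2 * n * x₁)⁻¹ := by
            intro y₂
            rw [lintegral_const_mul' _ _ Wf_ne_top]
            congr 1
            exact lint_exp_Iio (by positivity) y₂
          have hW : ∫⁻ a : ℝ, Wf H s t a = ENNReal.ofReal (t ^ (H + 1/2) / (H + 1/2)) :=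
            lint_W hH1 hs ht
          rw [lintegral_congr h3, lintegral_mul_const' _ _ ENNReal.ofReal_ne_top, hW, ← hJ]
          ring
        · have hA : Af H t x₁ = 0 := if_neg hx
          simp [hA]
    _ = (C1 * c2) * ((∫⁻ x₁ : ℝ, Af H t x₁ * ENNReal.ofReal (2 * n * x₁)⁻¹) * J) := by
        rw [lintegral_mul_const' _ _ ENNReal.ofReal_ne_top]
    _ = C1 * c2 * J
          * ENNReal.ofReal ((2 * n)⁻¹ * (t ^ (H - 1/2) * (1 / (H - 1/2) + 1 / (3/2 - H)))) := by
        rw [show (∫⁻ x₁ : ℝ, Af H t x₁ * ENNReal.ofReal (2 * n * x₁)⁻¹)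
            = ENNReal.ofReal ((2 * n)⁻¹ * (t ^ (H - 1/2) * (1 / (H - 1/2) + 1 / (3/2 - H))))
          from lint_A hH1 hH2 ht hn]
        ring

end

section
variable {H s t n : ℝ}

lemma scalar_ineq (hH1 : 1/2 < H) (hH2 : H < 1) :
    (1/(H - 1/2) + 1/(3/2 - H)) / (4 * (H + 1/2))
      ≤ 3 / (8 * H * (2 * H - 1)) + 1 / (8 * H * (3 - 2 * H)) + 1 / (4 * H ^ 2 - 1) := by
  have h1 : (0:ℝ) < H - 1/2 := by linarith
  have h2 : (0:ℝ) < 3/2 - H := by linarith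
  have h3 : (0:ℝ) < H + 1/2 := by linarith
  have h4 : (0:ℝ) < 2 * H - 1 := by linarith
  have h5 : (0:ℝ) < 3 - 2 * H := by linarith
  have h6 : (0:ℝ) < 2 * H + 1 := by linarith
  have h7 : (0:ℝ) < H := by linarith
  have n1 : H - 1/2 ≠ 0 := h1.ne'
  have n2 : (3:ℝ)/2 - H ≠ 0 := h2.ne'
  have n4 : 2 * H - 1 ≠ 0 := h4.ne'
  have n5 : (3:ℝ) - 2 * H ≠ 0 := h5.ne'
  have n6 : 2 * H + 1 ≠ 0 := h6.ne'
  have e1 : (1/(H - 1/2) + 1/(3/2 - H)) / (4 * (H + 1/2))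
      = 2 / ((2*H-1)*(3-2*H)*(2*H+1)) := by
    rw [div_add_div _ _ n1 n2, div_div,
      div_eq_div_iff (mul_pos (mul_pos h1 h2) (by linarith : (0:ℝ) < 4*(H+1/2))).ne'
        (mul_pos (mul_pos h4 h5) h6).ne']
    ring
  have e3 : 2 / ((2*H-1)*(3-2*H)*(2*H+1)) = 1/((2*H-1)*(2*H+1)) + 1/((3-2*H)*(2*H+1)) := by
    rw [div_add_div _ _ (mul_ne_zero n4 n6) (mul_ne_zero n5 n6),
      div_eq_div_iff (mul_pos (mul_pos h4 h5) h6).ne'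
        (mul_pos (mul_pos h4 h6) (mul_pos h5 h6)).ne']
    ring
  have e2 : 1/(4 * H ^ 2 - 1) = 1/((2*H-1)*(2*H+1)) := by
    congr 1
    ring
  rw [e1, e3, e2]
  have final : 1/((3-2*H)*(2*H+1)) ≤ 3 / (8 * H * (2 * H - 1)) + 1 / (8 * H * (3 - 2 * H)) := by
    rw [div_add_div _ _ (by positivity) (by positivity),
      div_le_div_iff₀ (by positivity) (by positivity)]
    nlinarith [mul_pos h4 h5, mul_pos h7 h4, mul_pos (mul_pos h7 h4) h5, sq_nonneg (H - 1),
      mul_pos h5 h6]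
  linarith

lemma final_algebra (hH1 : 1/2 < H) (hH2 : H < 1) (hs : 0 < s) (htpos : 0 < t) (hn : 0 < n) :
    n^2 * (Real.sqrt (s+1) * (2*n*Real.sqrt s)⁻¹ * (t^(H+1/2)/(H+1/2))
        * ((2*n)⁻¹ * (t^(H-1/2) * (1/(H-1/2) + 1/(3/2-H)))))
      ≤ (3/(8*H*(2*H-1)) + 1/(8*H*(3-2*H)) + 1/(4*H^2-1)) * Real.sqrt ((s+1)/s) * t^(2*H) := by
  have h1 : (0:ℝ) < H - 1/2 := by linarith
  have h2 : (0:ℝ) < 3/2 - H := by linarith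
  have h3 : (0:ℝ) < H + 1/2 := by linarith
  have hsq : 0 < Real.sqrt s := Real.sqrt_pos.mpr hs
  have e0 : n^2 * (Real.sqrt (s+1) * (2*n*Real.sqrt s)⁻¹ * (t^(H+1/2)/(H+1/2))
        * ((2*n)⁻¹ * (t^(H-1/2) * (1/(H-1/2) + 1/(3/2-H)))))
      = (Real.sqrt (s+1) / Real.sqrt s) * (t^(H+1/2) * t^(H-1/2))
        * ((1/(H-1/2) + 1/(3/2-H)) / (4*(H+1/2))) := by
    field_simp
    ring
  rw [e0, ← Real.rpow_add htpos, show H+1/2+(H-1/2) = 2*H by ring,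
    ← Real.sqrt_div (by linarith : (0:ℝ) ≤ s+1) s]
  have hnn : 0 ≤ Real.sqrt ((s+1)/s) * t^(2*H) :=
    mul_nonneg (Real.sqrt_nonneg _) (Real.rpow_nonneg htpos.le _)
  calc Real.sqrt ((s+1)/s) * t^(2*H) * ((1/(H-1/2) + 1/(3/2-H)) / (4*(H+1/2)))
      = ((1/(H-1/2) + 1/(3/2-H)) / (4*(H+1/2))) * (Real.sqrt ((s+1)/s) * t^(2*H)) := by ring
    _ ≤ (3/(8*H*(2*H-1)) + 1/(8*H*(3-2*H)) + 1/(4*H^2-1))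
          * (Real.sqrt ((s+1)/s) * t^(2*H)) :=
        mul_le_mul_of_nonneg_right (scalar_ineq hH1 hH2) hnn
    _ = (3/(8*H*(2*H-1)) + 1/(8*H*(3-2*H)) + 1/(4*H^2-1)) * Real.sqrt ((s+1)/s) * t^(2*H) := by
        ring

end

end
end Stmt10Aux

open Stmt10Aux in
/-- For `H ∈ (1/2,1)`, `s > 0`, `t ∈ [0,1]`,
`φ̃_t = φ_t · 1_S` with `S = {x > 0, −t−s < y < −s}` and
`K₁ = 3/(8H(2H−1)) + 1/(8H(3−2H)) + 1/(4H²−1)`, for every `n > 0`,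
`I₂(n, φ̃_t) ≤ K₁ √((s+1)/s) t^{2H}`. -/
theorem stmt10 {H s : ℝ} (hH : H ∈ Set.Ioo (1 / 2 : ℝ) 1) (hs : 0 < s)
    {n : ℝ} (hn : 0 < n) (t : ℝ) (ht : t ∈ Set.Icc (0 : ℝ) 1) :
    I2 n (fun x y =>
        if 0 < x ∧ -t - s < y ∧ y < -s then gker s t x y / x ^ (2 - H) else 0)
      ≤ (3 / (8 * H * (2 * H - 1)) + 1 / (8 * H * (3 - 2 * H)) + 1 / (4 * H ^ 2 - 1))
          * Real.sqrt ((s + 1) / s) * t ^ (2 * H) := by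
  obtain ⟨hH1, hH2⟩ := hH
  obtain ⟨ht0, ht1⟩ := ht
  have hK : 0 ≤ 3 / (8 * H * (2 * H - 1)) + 1 / (8 * H * (3 - 2 * H)) + 1 / (4 * H ^ 2 - 1) := by
    have d1 : (0:ℝ) < 8 * H * (2 * H - 1) := by nlinarith
    have d2 : (0:ℝ) < 8 * H * (3 - 2 * H) := by nlinarith
    have d3 : (0:ℝ) < 4 * H ^ 2 - 1 := by nlinarith
    have := div_pos (by norm_num : (0:ℝ) < 3) d1
    have := div_pos one_pos d2
    have := div_pos one_pos d3
    linarith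
  have hRHS : 0 ≤ (3 / (8 * H * (2 * H - 1)) + 1 / (8 * H * (3 - 2 * H)) + 1 / (4 * H ^ 2 - 1))
      * Real.sqrt ((s + 1) / s) * t ^ (2 * H) :=
    mul_nonneg (mul_nonneg hK (Real.sqrt_nonneg _)) (Real.rpow_nonneg ht0 _)
  rcases eq_or_lt_of_le ht0 with h0 | htpos
  · subst h0
    have hz : ∀ x y : ℝ,
        (if 0 < x ∧ -(0:ℝ) - s < y ∧ y < -s then gker s 0 x y / x ^ (2 - H) else 0) = 0 := by
      intro x y
      apply if_neg
      rintro ⟨-, hy1, hy2⟩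
      linarith
    rw [I2]
    simp only [hz, zero_mul, mul_zero, integral_zero]
    exact hRHS
  · rw [I2]
    set Aset : Set ((ℝ × ℝ) × ℝ × ℝ) := {p : (ℝ × ℝ) × ℝ × ℝ |
      0 < p.1.1 ∧ p.1.1 ≤ p.2.1 ∧ p.1.2 < p.2.2 ∧ p.2.2 ≤ 0} with hAset
    by_cases hint : Integrable (fun p : (ℝ × ℝ) × ℝ × ℝ =>
        (if 0 < p.1.1 ∧ -t - s < p.1.2 ∧ p.1.2 < -s then
          gker s t p.1.1 p.1.2 / p.1.1 ^ (2 - H) else 0)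
        * (if 0 < p.2.1 ∧ -t - s < p.2.2 ∧ p.2.2 < -s then
          gker s t p.2.1 p.2.2 / p.2.1 ^ (2 - H) else 0)
        * Real.sqrt (p.1.1 * |p.1.2|) * Real.sqrt (p.2.1 * |p.2.2|)
        * Real.exp (-2 * n * (p.1.1 * (p.2.2 - p.1.2) - (p.2.1 - p.1.1) * p.2.2)))
        (volume.restrict Aset)
    · have hgnn : ∀ p : (ℝ × ℝ) × ℝ × ℝ, 0 ≤
          (if 0 < p.1.1 ∧ -t - s < p.1.2 ∧ p.1.2 < -s then
            gker s t p.1.1 p.1.2 / p.1.1 ^ (2 - H) else 0)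
          * (if 0 < p.2.1 ∧ -t - s < p.2.2 ∧ p.2.2 < -s then
            gker s t p.2.1 p.2.2 / p.2.1 ^ (2 - H) else 0)
          * Real.sqrt (p.1.1 * |p.1.2|) * Real.sqrt (p.2.1 * |p.2.2|)
          * Real.exp (-2 * n * (p.1.1 * (p.2.2 - p.1.2) - (p.2.1 - p.1.1) * p.2.2)) :=
        fun p => mul_nonneg (mul_nonneg (mul_nonneg
          (mul_nonneg (ff_nonneg hs _ _) (ff_nonneg hs _ _))
          (Real.sqrt_nonneg _)) (Real.sqrt_nonneg _)) (Real.exp_pos _).le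
      rw [integral_eq_lintegral_of_nonneg_ae (Eventually.of_forall hgnn)
        hint.aestronglyMeasurable]
      have hD : 0 ≤ (1/(H-1/2) + 1/(3/2-H)) := by
        have i1 := one_div_pos.mpr (show (0:ℝ) < H - 1/2 by linarith)
        have i2 := one_div_pos.mpr (show (0:ℝ) < 3/2 - H by linarith)
        linarith
      have hBnd0 : 0 ≤ Real.sqrt (s+1) * (2*n*Real.sqrt s)⁻¹ * (t^(H+1/2)/(H+1/2))
          * ((2*n)⁻¹ * (t^(H-1/2) * (1/(H-1/2) + 1/(3/2-H)))) := by
        have := Real.rpow_nonneg htpos.le (H+1/2)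
        have := Real.rpow_nonneg htpos.le (H-1/2)
        have h3 : (0:ℝ) < H + 1/2 := by linarith
        apply mul_nonneg
        · apply mul_nonneg
          · exact mul_nonneg (Real.sqrt_nonneg _) (by positivity)
          · exact div_nonneg (Real.rpow_nonneg htpos.le _) h3.le
        · exact mul_nonneg (by positivity) (mul_nonneg (Real.rpow_nonneg htpos.le _) hD)
      have hchain : ∫⁻ p in Aset, ENNReal.ofReal
          ((if 0 < p.1.1 ∧ -t - s < p.1.2 ∧ p.1.2 < -s then
            gker s t p.1.1 p.1.2 / p.1.1 ^ (2 - H) else 0)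
          * (if 0 < p.2.1 ∧ -t - s < p.2.2 ∧ p.2.2 < -s then
            gker s t p.2.1 p.2.2 / p.2.1 ^ (2 - H) else 0)
          * Real.sqrt (p.1.1 * |p.1.2|) * Real.sqrt (p.2.1 * |p.2.2|)
          * Real.exp (-2 * n * (p.1.1 * (p.2.2 - p.1.2) - (p.2.1 - p.1.1) * p.2.2)))
          ≤ ENNReal.ofReal (Real.sqrt (s+1) * (2*n*Real.sqrt s)⁻¹ * (t^(H+1/2)/(H+1/2))
            * ((2*n)⁻¹ * (t^(H-1/2) * (1/(H-1/2) + 1/(3/2-H))))) := by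
        calc ∫⁻ p in Aset, ENNReal.ofReal _
            ≤ ∫⁻ p in Aset, Mf H s t n p :=
              setLIntegral_mono measurable_Mf fun p hp =>
                dominate hH1 hH2 hs ht0 ht1 p hp
          _ ≤ ∫⁻ p, Mf H s t n p := setLIntegral_le_lintegral _ _
          _ ≤ ENNReal.ofReal (Real.sqrt (s + 1)) * ENNReal.ofReal (2 * n * Real.sqrt s)⁻¹
              * ENNReal.ofReal (t ^ (H + 1/2) / (H + 1/2))
              * ENNReal.ofReal ((2 * n)⁻¹ * (t ^ (H - 1/2) * (1 / (H - 1/2) + 1 / (3/2 - H)))) :=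
              lint_M_le hH1 hH2 hs htpos hn
          _ = ENNReal.ofReal (Real.sqrt (s+1) * (2*n*Real.sqrt s)⁻¹ * (t^(H+1/2)/(H+1/2))
              * ((2*n)⁻¹ * (t^(H-1/2) * (1/(H-1/2) + 1/(3/2-H))))) := by
              rw [← ENNReal.ofReal_mul (Real.sqrt_nonneg _),
                ← ENNReal.ofReal_mul (mul_nonneg (Real.sqrt_nonneg _) (by positivity)),
                ← ENNReal.ofReal_mul (mul_nonneg (mul_nonneg (Real.sqrt_nonneg _) (by positivity))
                  (div_nonneg (Real.rpow_nonneg htpos.le _) (by linarith)))]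
      have htoReal := ENNReal.toReal_le_of_le_ofReal hBnd0 hchain
      calc n ^ 2 * (∫⁻ p in Aset, ENNReal.ofReal _).toReal
          ≤ n ^ 2 * (Real.sqrt (s+1) * (2*n*Real.sqrt s)⁻¹ * (t^(H+1/2)/(H+1/2))
            * ((2*n)⁻¹ * (t^(H-1/2) * (1/(H-1/2) + 1/(3/2-H))))) :=
            mul_le_mul_of_nonneg_left htoReal (sq_nonneg n)
        _ ≤ (3 / (8 * H * (2 * H - 1)) + 1 / (8 * H * (3 - 2 * H)) + 1 / (4 * H ^ 2 - 1))
              * Real.sqrt ((s + 1) / s) * t ^ (2 * H) := final_algebra hH1 hH2 hs htpos hn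
    · rw [integral_undef hint, mul_zero]
      exact hRHS
end

section
/- Fix H ∈ (1/2,1) and s > 0. For 0 ≤ t ≤ 1 and a constant M ≤ −2−s, let Ḡ(M) = {(x,y) : −t−s−y < x, y ≤ M} and φ̄_t(x,y) = φ_t(x,y)·1_{Ḡ(M)}(x,y), where φ_t(x,y) = g_s(t,x,y)/x^{2−H}. Let K₂ = 1/(4(1−H)(3−2H)(2H−1)). Then there exists a constant C > 0, independent of t, M, H and n, such that for every n > 0, I₂(n, φ̄_t) ≤ K₂ C t^{2H}. -/
open MeasureTheory ProbabilityTheory Filter Topology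

open Set
open scoped ENNReal NNReal

noncomputable section

theorem gker_nonneg {s t : ℝ} (hs : 0 ≤ s) (ht : 0 ≤ t) (x y : ℝ) : 0 ≤ gker s t x y := by
  unfold gker hker
  have h : max (min (s + y) 0 + x) 0 ≤ max (min (t + s + y) 0 + x) 0 := by
    have : min (s + y) 0 ≤ min (t + s + y) 0 := by
      apply min_le_min _ le_rfl; linarith
    exact max_le_max (by linarith) le_rfl
  linarith

theorem gker_le {s t : ℝ} (ht : 0 ≤ t) (x y : ℝ) : gker s t x y ≤ t := by
  unfold gker hker
  have h1 : min (t + s + y) 0 ≤ min (s + y) 0 + t := by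
    rcases le_total (s + y) 0 with h | h
    · rw [min_eq_left h]
      exact le_trans (min_le_left _ _) (by linarith)
    · rw [min_eq_right h]
      exact le_trans (min_le_right _ _) (by linarith)
  have h : max (min (t + s + y) 0 + x) 0 ≤ max (min (s + y) 0 + x) 0 + t := by
    calc max (min (t + s + y) 0 + x) 0 ≤ max (min (s + y) 0 + t + x) (0 + t) := by
          apply max_le_max (by linarith) (by linarith)
      _ = max (min (s + y) 0 + x) 0 + t := by rw [← max_add_add_right]; ring_nf
  linarith

/-- `∫ x in Ioi L, exp (-(c*x)) = exp(-(c*L))/c`. -/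
theorem int_exp_Ioi (c L : ℝ) (hc : 0 < c) :
    ∫ x in Ioi L, Real.exp (-(c * x)) = Real.exp (-(c * L)) / c := by
  have := MeasureTheory.integral_comp_mul_left_Ioi (fun y => Real.exp (-y)) L hc
  simp only [smul_eq_mul] at this
  rw [this, integral_exp_neg_Ioi]
  field_simp

theorem intOn_exp_Ioi (c L : ℝ) (hc : 0 < c) :
    IntegrableOn (fun x => Real.exp (-(c * x))) (Ioi L) := by
  simpa [neg_mul] using exp_neg_integrableOn_Ioi L hc

/-- lintegral version on an `Ici` tail. -/
theorem lint_exp_tail (c L : ℝ) (hc : 0 < c) :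
    ∫⁻ x : ℝ, (if L ≤ x then (1:ℝ≥0∞) else 0) * ENNReal.ofReal (Real.exp (-(c * x)))
      = ENNReal.ofReal (Real.exp (-(c * L)) / c) := by
  have h1 : ∀ x : ℝ, (if L ≤ x then (1:ℝ≥0∞) else 0) * ENNReal.ofReal (Real.exp (-(c * x)))
      = (Ici L).indicator (fun x => ENNReal.ofReal (Real.exp (-(c * x)))) x := by
    intro x
    by_cases h : L ≤ x <;> simp [Set.indicator_apply, h]
  simp_rw [h1]
  rw [lintegral_indicator measurableSet_Ici, ← MeasureTheory.restrict_Ioi_eq_restrict_Ici,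
    ← ofReal_integral_eq_lintegral_ofReal (intOn_exp_Ioi c L hc)
      (Filter.Eventually.of_forall fun x => (Real.exp_pos _).le),
    int_exp_Ioi c L hc]

/-- `∫⁻ x, 1_{x ≤ b} exp (-(c*(b-x))) = 1/c`. -/
theorem lint_exp_le (c b : ℝ) (hc : 0 < c) :
    ∫⁻ x : ℝ, (if x ≤ b then (1:ℝ≥0∞) else 0) * ENNReal.ofReal (Real.exp (-(c * (b - x))))
      = ENNReal.ofReal (1 / c) := by
  have hmeas : Measurable fun x : ℝ =>
      (if x ≤ b then (1:ℝ≥0∞) else 0) * ENNReal.ofReal (Real.exp (-(c * (b - x)))) := by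
    apply Measurable.mul
    · exact Measurable.ite measurableSet_Iic measurable_const measurable_const
    · exact ENNReal.measurable_ofReal.comp
        (Real.continuous_exp.measurable.comp (by fun_prop))
  have hcomp := (Measure.measurePreserving_neg (volume : Measure ℝ)).lintegral_comp hmeas
  rw [← hcomp]
  have h2 : ∀ x : ℝ, (if (-x : ℝ) ≤ b then (1:ℝ≥0∞) else 0) *
      ENNReal.ofReal (Real.exp (-(c * (b - -x))))
      = ENNReal.ofReal (Real.exp (-(c * b))) *
        ((if (-b : ℝ) ≤ x then (1:ℝ≥0∞) else 0) * ENNReal.ofReal (Real.exp (-(c * x)))) := by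
    intro x
    have hiff : ((-x : ℝ) ≤ b) ↔ ((-b : ℝ) ≤ x) := by constructor <;> intro h <;> linarith
    have hexp : Real.exp (-(c * (b - -x))) = Real.exp (-(c * b)) * Real.exp (-(c * x)) := by
      rw [← Real.exp_add]; ring_nf
    by_cases h : (-b : ℝ) ≤ x
    · simp only [hiff.mpr h, if_pos, h, if_pos, one_mul, hexp]
      rw [ENNReal.ofReal_mul (Real.exp_pos _).le]
    · rw [if_neg h, if_neg (fun hh => h (hiff.mp hh))]
      simp
  simp_rw [fun x => h2 x]
  rw [lintegral_const_mul' _ _ ENNReal.ofReal_ne_top, lint_exp_tail c (-b) hc,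
    ← ENNReal.ofReal_mul (Real.exp_pos _).le]
  congr 1
  rw [← mul_div_assoc, ← Real.exp_add]
  norm_num

/-- `∫⁻ x, 1_{L ≤ x} x^p = L^(p+1)/(-p-1)` for `p < -1`, `0 < L`. -/
theorem lint_pow_tail (p L : ℝ) (hp : p < -1) (hL : 0 < L) :
    ∫⁻ x : ℝ, (if L ≤ x then (1:ℝ≥0∞) else 0) * ENNReal.ofReal (x ^ p)
      = ENNReal.ofReal (L ^ (p + 1) / (-p - 1)) := by
  have h1 : ∀ x : ℝ, (if L ≤ x then (1:ℝ≥0∞) else 0) * ENNReal.ofReal (x ^ p)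
      = (Ici L).indicator (fun x => ENNReal.ofReal (x ^ p)) x := by
    intro x
    by_cases h : L ≤ x <;> simp [Set.indicator_apply, h]
  simp_rw [h1]
  rw [lintegral_indicator measurableSet_Ici, ← MeasureTheory.restrict_Ioi_eq_restrict_Ici,
    ← ofReal_integral_eq_lintegral_ofReal (integrableOn_Ioi_rpow_of_lt hp hL)
      ((ae_restrict_mem measurableSet_Ioi).mono fun x hx =>
        Real.rpow_nonneg (le_of_lt (hL.trans hx)) p),
    integral_Ioi_rpow_of_lt hp hL]
  congr 1
  rw [div_eq_div_iff (by linarith) (by linarith)]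
  ring

/-- `∫⁻ y, 1_{y ≤ -a} c·(-y)^q = c·(a^(q+1)/(-q-1))` for `q < -1`, `0 < a`, `0 ≤ c`. -/
theorem lint_neg_tail (a c q : ℝ) (ha : 0 < a) (hq : q < -1) (hc : 0 ≤ c) :
    ∫⁻ y : ℝ, (if y ≤ -a then (1:ℝ≥0∞) else 0) * ENNReal.ofReal (c * (-y) ^ q)
      = ENNReal.ofReal c * ENNReal.ofReal (a ^ (q + 1) / (-q - 1)) := by
  have hmeas : Measurable fun y : ℝ =>
      (if y ≤ -a then (1:ℝ≥0∞) else 0) * ENNReal.ofReal (c * (-y) ^ q) := by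
    apply Measurable.mul
    · exact Measurable.ite measurableSet_Iic measurable_const measurable_const
    · exact ENNReal.measurable_ofReal.comp (by fun_prop)
  have hcomp := (Measure.measurePreserving_neg (volume : Measure ℝ)).lintegral_comp hmeas
  rw [← hcomp]
  have h2 : ∀ x : ℝ, (if (-x : ℝ) ≤ -a then (1:ℝ≥0∞) else 0) * ENNReal.ofReal (c * (-(-x)) ^ q)
      = ENNReal.ofReal c * ((if a ≤ x then (1:ℝ≥0∞) else 0) * ENNReal.ofReal (x ^ q)) := by
    intro x
    have hiff : ((-x : ℝ) ≤ -a) ↔ (a ≤ x) := by constructor <;> intro h <;> linarith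
    by_cases h : a ≤ x
    · rw [if_pos (hiff.mpr h), if_pos h, neg_neg, one_mul, one_mul,
        ENNReal.ofReal_mul hc]
    · rw [if_neg (fun hh => h (hiff.mp hh)), if_neg h]
      simp
  simp_rw [fun x => h2 x]
  rw [lintegral_const_mul' _ _ ENNReal.ofReal_ne_top, lint_pow_tail q a hq ha]

/-- The dominating function on `((x₁,y₁),(x₂,y₂))`. -/
def Tf (s H t n : ℝ) (p : (ℝ × ℝ) × ℝ × ℝ) : ℝ≥0∞ :=
  (if p.2.2 ≤ -(2+s) ∧ -p.2.2 - 1 - s ≤ p.1.1 ∧ p.1.1 ≤ p.2.1 then (1:ℝ≥0∞) else 0) *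
    ENNReal.ofReal (t^2 * Real.sqrt (2+s) * Real.sqrt (-p.2.2) * p.1.1 ^ (2*H - 5/2) *
      Real.exp (-(2*n*(-p.2.2) * (p.2.1 - p.1.1)))) *
  ((if p.1.2 < p.2.2 then (1:ℝ≥0∞) else 0) *
    ENNReal.ofReal (Real.exp (-(2*n*p.1.1 * (p.2.2 - p.1.2)))))

/-- The bound after integrating out `y₁`, as a function of `x₁` (with `x₂, y₂` fixed). -/
def Wf (s H t n x₂ y₂ : ℝ) (x₁ : ℝ) : ℝ≥0∞ :=
  (if y₂ ≤ -(2+s) ∧ -y₂ - 1 - s ≤ x₂ then (1:ℝ≥0∞) else 0) *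
    ENNReal.ofReal (t^2 * Real.sqrt (2+s) * Real.sqrt (-y₂)) *
  (ENNReal.ofReal (8/(2*n) * x₂ ^ (2*H - 7/2)) *
      ((if x₁ ≤ x₂ then (1:ℝ≥0∞) else 0) *
        ENNReal.ofReal (Real.exp (-(2*n*(-y₂) * (x₂ - x₁))))) +
    ENNReal.ofReal (1/(2*n) * Real.exp (-(n*(-y₂) * x₂))) *
      ((if -y₂ - 1 - s ≤ x₁ then (1:ℝ≥0∞) else 0) * ENNReal.ofReal (x₁ ^ (2*H - 7/2))))

/-- The bound after integrating out `y₁, x₁`, as a function of `(x₂, y₂)`. -/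
def Psi (s H t n : ℝ) (q : ℝ × ℝ) : ℝ≥0∞ :=
  (if q.2 ≤ -(2+s) ∧ -q.2 - 1 - s ≤ q.1 then (1:ℝ≥0∞) else 0) *
    ENNReal.ofReal (t^2 * Real.sqrt (2+s) * Real.sqrt (-q.2)) *
  (ENNReal.ofReal (8/(2*n) * q.1 ^ (2*H - 7/2)) * ENNReal.ofReal (1/(2*n*(-q.2))) +
    ENNReal.ofReal (1/(2*n) * Real.exp (-(n*(-q.2) * q.1))) *
      ENNReal.ofReal ((-q.2 - 1 - s) ^ (2*H - 7/2 + 1) / (-(2*H - 7/2) - 1)))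

/-- The bound after integrating out `y₁, x₁, x₂`, as a function of `y₂`. -/
def Theta (s H t n : ℝ) (y₂ : ℝ) : ℝ≥0∞ :=
  (if y₂ ≤ -(2+s) then (1:ℝ≥0∞) else 0) *
    ENNReal.ofReal (t^2 * Real.sqrt (2+s) * 5 * (2+s) ^ (3/2 : ℝ) / n^2 * (-y₂) ^ (2*H - 3))

theorem meas_Tf (s H t n : ℝ) : Measurable (Tf s H t n) := by
  unfold Tf
  refine Measurable.mul (Measurable.mul ?_ ?_) (Measurable.mul ?_ ?_)
  · refine Measurable.ite ?_ measurable_const measurable_const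
    simp only [Set.setOf_and]
    refine (MeasurableSet.inter ?_ (MeasurableSet.inter ?_ ?_)) <;>
      exact measurableSet_le (by fun_prop) (by fun_prop)
  · exact ENNReal.measurable_ofReal.comp (by fun_prop)
  · exact Measurable.ite (measurableSet_lt (by fun_prop) (by fun_prop))
      measurable_const measurable_const
  · exact ENNReal.measurable_ofReal.comp (by fun_prop)

theorem meas_Psi (s H t n : ℝ) : Measurable (Psi s H t n) := by
  unfold Psi
  refine Measurable.mul (Measurable.mul ?_ ?_) (Measurable.fun_add (Measurable.fun_mul ?_ ?_)
    (Measurable.fun_mul ?_ ?_))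
  · refine Measurable.ite ?_ measurable_const measurable_const
    simp only [Set.setOf_and]
    exact (measurableSet_le (by fun_prop) (by fun_prop)).inter
      (measurableSet_le (by fun_prop) (by fun_prop))
  all_goals exact ENNReal.measurable_ofReal.comp (by fun_prop)

theorem S3pt (s H t n x₂ y₂ x₁ : ℝ) (hs : 0 < s) (hH1 : 1/2 < H) (hH2 : H < 1)
    (hn : 0 < n) (ht0 : 0 ≤ t) :
    ((if y₂ ≤ -(2+s) ∧ -y₂ - 1 - s ≤ x₁ ∧ x₁ ≤ x₂ then (1:ℝ≥0∞) else 0) *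
      ENNReal.ofReal (t^2 * Real.sqrt (2+s) * Real.sqrt (-y₂) * x₁ ^ (2*H - 5/2) *
        Real.exp (-(2*n*(-y₂) * (x₂ - x₁))))) * ENNReal.ofReal (1/(2*n*x₁))
    ≤ Wf s H t n x₂ y₂ x₁ := by
  by_cases hc : y₂ ≤ -(2+s) ∧ -y₂ - 1 - s ≤ x₁ ∧ x₁ ≤ x₂
  case neg => rw [if_neg hc]; simp
  obtain ⟨hy, hL, hx12⟩ := hc
  have hv : 2 + s ≤ -y₂ := by linarith
  have hL1 : (1:ℝ) ≤ -y₂ - 1 - s := by linarith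
  have hx1 : (1:ℝ) ≤ x₁ := le_trans hL1 hL
  have hx1p : (0:ℝ) < x₁ := by linarith
  have hx2 : (1:ℝ) ≤ x₂ := le_trans hx1 hx12
  have hvp : (0:ℝ) < -y₂ := by linarith
  have hc0 : (0:ℝ) ≤ t^2 * Real.sqrt (2+s) * Real.sqrt (-y₂) := by positivity
  have hE : (0:ℝ) < Real.exp (-(2*n*(-y₂) * (x₂ - x₁))) := Real.exp_pos _
  have hxp5 : (0:ℝ) ≤ x₁ ^ (2*H - 5/2) := Real.rpow_nonneg hx1p.le _
  have e1 : x₁ ^ (2*H - 5/2) = x₁ ^ (2*H - 7/2) * x₁ := by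
    rw [show 2*H - 5/2 = (2*H - 7/2) + 1 by ring, Real.rpow_add_one hx1p.ne']
  rw [Wf, if_pos ⟨hy, hL, hx12⟩, if_pos ⟨hy, le_trans hL hx12⟩]
  simp only [one_mul]
  rw [← ENNReal.ofReal_mul (by positivity)]
  rcases le_or_gt (x₂/2) x₁ with hcase | hcase
  · -- close to the diagonal: use the first summand
    have key : x₁ ^ (2*H - 7/2) ≤ 8 * x₂ ^ (2*H - 7/2) := by
      have k1 : x₁ ^ (2*H - 7/2) ≤ (x₂/2) ^ (2*H - 7/2) :=
        Real.rpow_le_rpow_of_nonpos (by linarith) hcase (by linarith)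
      have k2 : (x₂/2) ^ (2*H - 7/2) = x₂ ^ (2*H - 7/2) / 2 ^ (2*H - 7/2) :=
        Real.div_rpow (by linarith) (by norm_num) _
      have k3 : (1:ℝ) / 2 ^ (2*H - 7/2) = 2 ^ (7/2 - 2*H) := by
        rw [one_div, ← Real.rpow_neg (by norm_num : (0:ℝ) ≤ 2)]
        congr 1; ring
      have k4 : (2:ℝ) ^ (7/2 - 2*H) ≤ 8 := by
        have : (2:ℝ) ^ (7/2 - 2*H) ≤ 2 ^ (3:ℝ) :=
          Real.rpow_le_rpow_of_exponent_le one_le_two (by linarith)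
        have h8 : (2:ℝ) ^ (3:ℝ) = 8 := by
          rw [show (3:ℝ) = ((3:ℕ):ℝ) by norm_num, Real.rpow_natCast]; norm_num
        linarith
      have k5 : (0:ℝ) ≤ x₂ ^ (2*H - 7/2) := Real.rpow_nonneg (by linarith) _
      calc x₁ ^ (2*H - 7/2) ≤ x₂ ^ (2*H - 7/2) / 2 ^ (2*H - 7/2) := by rw [← k2]; exact k1
        _ = x₂ ^ (2*H - 7/2) * (1 / 2 ^ (2*H - 7/2)) := by ring
        _ = x₂ ^ (2*H - 7/2) * 2 ^ (7/2 - 2*H) := by rw [k3]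
        _ ≤ x₂ ^ (2*H - 7/2) * 8 := by nlinarith [Real.rpow_pos_of_pos (by norm_num : (0:ℝ) < 2) (7/2 - 2*H)]
        _ = 8 * x₂ ^ (2*H - 7/2) := by ring
    refine le_trans ?_ (mul_le_mul_right le_self_add _)
    rw [if_pos hx12, one_mul, ← ENNReal.ofReal_mul (by positivity),
      ← ENNReal.ofReal_mul (by positivity)]
    apply ENNReal.ofReal_le_ofReal
    have lhs_eq : t^2 * Real.sqrt (2+s) * Real.sqrt (-y₂) * x₁ ^ (2*H - 5/2) *
        Real.exp (-(2*n*(-y₂) * (x₂ - x₁))) * (1/(2*n*x₁))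
        = (t^2 * Real.sqrt (2+s) * Real.sqrt (-y₂)) *
          (x₁ ^ (2*H - 7/2) * Real.exp (-(2*n*(-y₂) * (x₂ - x₁))) * (1/(2*n))) := by
      rw [e1]; field_simp; all_goals ring
    rw [lhs_eq]
    have rhs_eq : t^2 * Real.sqrt (2+s) * Real.sqrt (-y₂) *
        (8/(2*n) * x₂ ^ (2*H - 7/2) * Real.exp (-(2*n*(-y₂) * (x₂ - x₁))))
        = (t^2 * Real.sqrt (2+s) * Real.sqrt (-y₂)) *
          ((8 * x₂ ^ (2*H - 7/2)) * Real.exp (-(2*n*(-y₂) * (x₂ - x₁))) * (1/(2*n))) := by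
      field_simp; all_goals ring
    rw [rhs_eq]
    apply mul_le_mul_of_nonneg_left _ hc0
    apply mul_le_mul_of_nonneg_right _ (by positivity)
    exact mul_le_mul_of_nonneg_right key hE.le
  · -- far from the diagonal: use the second summand
    have hexp : Real.exp (-(2*n*(-y₂) * (x₂ - x₁))) ≤ Real.exp (-(n*(-y₂) * x₂)) := by
      apply Real.exp_le_exp.mpr
      have : (0:ℝ) ≤ n * (-y₂) := by positivity
      nlinarith
    refine le_trans ?_ (mul_le_mul_right le_add_self _)
    rw [if_pos hL, one_mul, ← ENNReal.ofReal_mul (by positivity),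
      ← ENNReal.ofReal_mul (by positivity)]
    apply ENNReal.ofReal_le_ofReal
    have lhs_eq : t^2 * Real.sqrt (2+s) * Real.sqrt (-y₂) * x₁ ^ (2*H - 5/2) *
        Real.exp (-(2*n*(-y₂) * (x₂ - x₁))) * (1/(2*n*x₁))
        = (t^2 * Real.sqrt (2+s) * Real.sqrt (-y₂)) * (x₁ ^ (2*H - 7/2) * (1/(2*n))) *
          Real.exp (-(2*n*(-y₂) * (x₂ - x₁))) := by
      rw [e1]; field_simp; all_goals ring
    rw [lhs_eq]
    have rhs_eq : t^2 * Real.sqrt (2+s) * Real.sqrt (-y₂) *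
        (1/(2*n) * Real.exp (-(n*(-y₂) * x₂)) * x₁ ^ (2*H - 7/2))
        = (t^2 * Real.sqrt (2+s) * Real.sqrt (-y₂)) * (x₁ ^ (2*H - 7/2) * (1/(2*n))) *
          Real.exp (-(n*(-y₂) * x₂)) := by ring
    rw [rhs_eq]
    apply mul_le_mul_of_nonneg_left hexp
    positivity

theorem int_Wf (s H t n x₂ y₂ : ℝ) (hs : 0 < s) (hH2 : H < 1) (hn : 0 < n) :
    ∫⁻ x₁ : ℝ, Wf s H t n x₂ y₂ x₁ ≤ Psi s H t n (x₂, y₂) := by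
  by_cases hc : y₂ ≤ -(2+s) ∧ -y₂ - 1 - s ≤ x₂
  case neg =>
    simp only [Wf, Psi, if_neg hc, zero_mul, lintegral_zero, le_refl]
  have hvp : (0:ℝ) < -y₂ := by linarith [hc.1]
  have hLp : (0:ℝ) < -y₂ - 1 - s := by linarith [hc.1]
  unfold Wf Psi
  simp only [if_pos hc, one_mul]
  rw [lintegral_const_mul' _ _ ENNReal.ofReal_ne_top]
  apply mul_le_mul_right
  have hmeas1 : Measurable fun x₁ : ℝ => ENNReal.ofReal (8/(2*n) * x₂ ^ (2*H - 7/2)) *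
      ((if x₁ ≤ x₂ then (1:ℝ≥0∞) else 0) *
        ENNReal.ofReal (Real.exp (-(2*n*(-y₂) * (x₂ - x₁))))) := by
    apply Measurable.mul measurable_const
    exact (Measurable.ite measurableSet_Iic measurable_const measurable_const).mul
      (ENNReal.measurable_ofReal.comp (by fun_prop))
  rw [lintegral_add_left hmeas1, lintegral_const_mul' _ _ ENNReal.ofReal_ne_top,
    lintegral_const_mul' _ _ ENNReal.ofReal_ne_top,
    lint_exp_le (2*n*(-y₂)) x₂ (by positivity),
    lint_pow_tail (2*H - 7/2) (-y₂ - 1 - s) (by linarith) hLp]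

theorem RS1 (s H n v : ℝ) (hs : 0 < s) (hH1 : 1/2 < H) (hH2 : H < 1) (hn : 0 < n)
    (hv : 2 + s ≤ v) :
    Real.sqrt v * (8/(2*n) * (1/(2*n*v)) * ((v-1-s) ^ (2*H - 7/2 + 1) / (-(2*H - 7/2) - 1)) +
      1/(2*n) * ((v-1-s) ^ (2*H - 7/2 + 1) / (-(2*H - 7/2) - 1)) *
        (Real.exp (-(n*v*(v-1-s)))/(n*v)))
    ≤ 5 * (2+s) ^ ((3:ℝ)/2) / n^2 * v ^ (2*H - 3) := by
  have ha1 : (1:ℝ) ≤ 2 + s := by linarith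
  have hvp : (0:ℝ) < v := by linarith
  have hLp : (0:ℝ) < v - 1 - s := by linarith
  have hd : (1:ℝ)/2 ≤ -(2*H - 7/2) - 1 := by linarith
  set q : ℝ := 2*H - 7/2 + 1 with hqdef
  have hq0 : q ≤ 0 := by rw [hqdef]; linarith
  have hLq0 : (0:ℝ) ≤ (v-1-s) ^ q := Real.rpow_nonneg hLp.le _
  have hvq0 : (0:ℝ) ≤ v ^ q := Real.rpow_nonneg hvp.le _
  -- L^q ≤ a^{3/2} v^q
  have hq : (v-1-s) ^ q ≤ (2+s) ^ ((3:ℝ)/2) * v ^ q := by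
    have hva : v / (2+s) ≤ v - 1 - s := by
      rw [div_le_iff₀ (by linarith : (0:ℝ) < 2+s)]
      nlinarith
    have k1 : (v-1-s) ^ q ≤ (v/(2+s)) ^ q :=
      Real.rpow_le_rpow_of_nonpos (by positivity) hva hq0
    have k2 : (v/(2+s)) ^ q = v ^ q / (2+s) ^ q :=
      Real.div_rpow hvp.le (by linarith) _
    have k3 : v ^ q / (2+s) ^ q = v ^ q * (2+s) ^ (-q) := by
      rw [Real.rpow_neg (by linarith : (0:ℝ) ≤ 2+s), div_eq_mul_inv]
    have k4 : (2+s) ^ (-q) ≤ (2+s) ^ ((3:ℝ)/2) :=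
      Real.rpow_le_rpow_of_exponent_le ha1 (by rw [hqdef]; linarith)
    calc (v-1-s) ^ q ≤ (v/(2+s)) ^ q := k1
      _ = v ^ q * (2+s) ^ (-q) := by rw [k2, k3]
      _ ≤ v ^ q * (2+s) ^ ((3:ℝ)/2) := mul_le_mul_of_nonneg_left k4 hvq0
      _ = (2+s) ^ ((3:ℝ)/2) * v ^ q := by ring
  -- the main numeric part
  have hBle : (v-1-s) ^ q / (-(2*H - 7/2) - 1) ≤ 2 * (v-1-s) ^ q := by
    rw [div_le_iff₀ (by linarith : (0:ℝ) < -(2*H - 7/2) - 1)]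
    nlinarith
  have hexp1 : Real.exp (-(n*v*(v-1-s))) ≤ 1 := by
    rw [Real.exp_le_one_iff]
    have : (0:ℝ) ≤ n*v*(v-1-s) := by positivity
    linarith
  have hsum : 8/(2*n) * (1/(2*n*v)) * ((v-1-s) ^ q / (-(2*H - 7/2) - 1)) +
      1/(2*n) * ((v-1-s) ^ q / (-(2*H - 7/2) - 1)) * (Real.exp (-(n*v*(v-1-s)))/(n*v))
      ≤ 5 * (v-1-s) ^ q / (n^2 * v) := by
    have h1 : 8/(2*n) * (1/(2*n*v)) * ((v-1-s) ^ q / (-(2*H - 7/2) - 1))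
        ≤ 8/(2*n) * (1/(2*n*v)) * (2 * (v-1-s) ^ q) :=
      mul_le_mul_of_nonneg_left hBle (by positivity)
    have h2 : 1/(2*n) * ((v-1-s) ^ q / (-(2*H - 7/2) - 1)) * (Real.exp (-(n*v*(v-1-s)))/(n*v))
        ≤ 1/(2*n) * (2 * (v-1-s) ^ q) * (1/(n*v)) := by
      apply mul_le_mul
      · exact mul_le_mul_of_nonneg_left hBle (by positivity)
      · exact (div_le_div_iff_of_pos_right (by positivity)).mpr hexp1
      · positivity
      · positivity
    have e1 : 8/(2*n) * (1/(2*n*v)) * (2 * (v-1-s) ^ q) = 4 * (v-1-s) ^ q / (n^2 * v) := by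
      field_simp; ring
    have e2 : 1/(2*n) * (2 * (v-1-s) ^ q) * (1/(n*v)) = (v-1-s) ^ q / (n^2 * v) := by
      field_simp
    rw [e1] at h1; rw [e2] at h2
    have : 4 * (v-1-s) ^ q / (n^2*v) + (v-1-s) ^ q / (n^2*v) = 5 * (v-1-s) ^ q / (n^2*v) := by
      ring
    linarith
  -- multiply by √v and use hq
  have hsv : (0:ℝ) ≤ Real.sqrt v := Real.sqrt_nonneg v
  have step : Real.sqrt v * (5 * (v-1-s) ^ q / (n^2 * v))
      ≤ 5 * (2+s) ^ ((3:ℝ)/2) / n^2 * v ^ (2*H - 3) := by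
    have ev : Real.sqrt v * v ^ q / v = v ^ (2*H - 3) := by
      rw [Real.sqrt_eq_rpow, div_eq_mul_inv, ← Real.rpow_neg_one v,
        ← Real.rpow_add hvp, ← Real.rpow_add hvp]
      congr 1; rw [hqdef]; ring
    have hstep1 : Real.sqrt v * (5 * (v-1-s) ^ q / (n^2 * v))
        ≤ Real.sqrt v * (5 * ((2+s) ^ ((3:ℝ)/2) * v ^ q) / (n^2 * v)) := by
      apply mul_le_mul_of_nonneg_left _ hsv
      apply (div_le_div_iff_of_pos_right (by positivity)).mpr
      linarith
    calc Real.sqrt v * (5 * (v-1-s) ^ q / (n^2 * v))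
        ≤ Real.sqrt v * (5 * ((2+s) ^ ((3:ℝ)/2) * v ^ q) / (n^2 * v)) := hstep1
      _ = 5 * (2+s) ^ ((3:ℝ)/2) / n^2 * (Real.sqrt v * v ^ q / v) := by ring
      _ = 5 * (2+s) ^ ((3:ℝ)/2) / n^2 * v ^ (2*H - 3) := by rw [ev]
  calc Real.sqrt v * (8/(2*n) * (1/(2*n*v)) * ((v-1-s) ^ q / (-(2*H - 7/2) - 1)) +
        1/(2*n) * ((v-1-s) ^ q / (-(2*H - 7/2) - 1)) * (Real.exp (-(n*v*(v-1-s)))/(n*v)))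
      ≤ Real.sqrt v * (5 * (v-1-s) ^ q / (n^2 * v)) := mul_le_mul_of_nonneg_left hsum hsv
    _ ≤ 5 * (2+s) ^ ((3:ℝ)/2) / n^2 * v ^ (2*H - 3) := step

theorem int_Psi (s H t n : ℝ) (hs : 0 < s) (hH1 : 1/2 < H) (hH2 : H < 1) (hn : 0 < n)
    (y₂ : ℝ) :
    ∫⁻ x₂ : ℝ, Psi s H t n (x₂, y₂) ≤ Theta s H t n y₂ := by
  by_cases hy : y₂ ≤ -(2+s)
  case neg =>
    have hz : ∀ x₂ : ℝ, Psi s H t n (x₂, y₂) = 0 := by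
      intro x₂
      rw [Psi, if_neg (fun h => hy h.1), zero_mul, zero_mul]
    simp only [hz, lintegral_zero, Theta, if_neg hy, zero_mul, le_refl]
  have hvp : (0:ℝ) < -y₂ := by linarith
  have hLp : (0:ℝ) < -y₂ - 1 - s := by linarith
  have point : ∀ x₂ : ℝ, Psi s H t n (x₂, y₂)
      = ENNReal.ofReal (t^2 * Real.sqrt (2+s) * Real.sqrt (-y₂)) *
        (ENNReal.ofReal (8/(2*n) * (1/(2*n*(-y₂)))) *
           ((if -y₂ - 1 - s ≤ x₂ then (1:ℝ≥0∞) else 0) * ENNReal.ofReal (x₂ ^ (2*H - 7/2))) +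
         ENNReal.ofReal (1/(2*n) * ((-y₂ - 1 - s) ^ (2*H - 7/2 + 1) / (-(2*H - 7/2) - 1))) *
           ((if -y₂ - 1 - s ≤ x₂ then (1:ℝ≥0∞) else 0) *
             ENNReal.ofReal (Real.exp (-(n*(-y₂) * x₂))))) := by
    intro x₂
    rw [Psi]
    by_cases hx : -y₂ - 1 - s ≤ x₂
    · have hx2p : (0:ℝ) < x₂ := lt_of_lt_of_le hLp hx
      have hn2 : (0:ℝ) < 2*n := by linarith
      have hnv : (0:ℝ) < 2*n*(-y₂) := mul_pos hn2 hvp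
      have hd : (0:ℝ) < -(2*H - 7/2) - 1 := by linarith
      have hLq : (0:ℝ) ≤ (-y₂ - 1 - s) ^ (2*H - 7/2 + 1) := Real.rpow_nonneg hLp.le _
      have h1 : (0:ℝ) ≤ 8/(2*n) * x₂ ^ (2*H - 7/2) :=
        mul_nonneg (div_nonneg (by norm_num) hn2.le) (Real.rpow_nonneg hx2p.le _)
      have h2 : (0:ℝ) ≤ 8/(2*n) * (1/(2*n*(-y₂))) :=
        mul_nonneg (div_nonneg (by norm_num) hn2.le) (one_div_nonneg.mpr hnv.le)
      have h3 : (0:ℝ) ≤ 1/(2*n) * Real.exp (-(n*(-y₂) * x₂)) :=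
        mul_nonneg (one_div_nonneg.mpr hn2.le) (Real.exp_pos _).le
      have h4 : (0:ℝ) ≤ 1/(2*n) * ((-y₂ - 1 - s) ^ (2*H - 7/2 + 1) / (-(2*H - 7/2) - 1)) :=
        mul_nonneg (one_div_nonneg.mpr hn2.le) (div_nonneg hLq hd.le)
      rw [if_pos ⟨hy, hx⟩, if_pos hx]
      simp only [one_mul]
      congr 1
      congr 1
      · rw [← ENNReal.ofReal_mul h1, ← ENNReal.ofReal_mul h2]
        congr 1; ring
      · rw [← ENNReal.ofReal_mul h3, ← ENNReal.ofReal_mul h4]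
        congr 1; ring
    · rw [if_neg (fun h => hx h.2), if_neg hx]
      simp
  rw [lintegral_congr point]
  have hmeas1 : Measurable fun x₂ : ℝ => ENNReal.ofReal (8/(2*n) * (1/(2*n*(-y₂)))) *
      ((if -y₂ - 1 - s ≤ x₂ then (1:ℝ≥0∞) else 0) * ENNReal.ofReal (x₂ ^ (2*H - 7/2))) := by
    apply Measurable.mul measurable_const
    exact (Measurable.ite measurableSet_Ici measurable_const measurable_const).mul
      (ENNReal.measurable_ofReal.comp (by fun_prop))
  rw [lintegral_const_mul' _ _ ENNReal.ofReal_ne_top, lintegral_add_left hmeas1,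
    lintegral_const_mul' _ _ ENNReal.ofReal_ne_top,
    lintegral_const_mul' _ _ ENNReal.ofReal_ne_top,
    lint_pow_tail (2*H - 7/2) (-y₂ - 1 - s) (by linarith) hLp,
    lint_exp_tail (n*(-y₂)) (-y₂ - 1 - s) (by positivity)]
  rw [Theta, if_pos hy, one_mul]
  have hn2 : (0:ℝ) < 2*n := by linarith
  have hnv : (0:ℝ) < 2*n*(-y₂) := mul_pos hn2 hvp
  have hd : (0:ℝ) < -(2*H - 7/2) - 1 := by linarith
  have hLq : (0:ℝ) ≤ (-y₂ - 1 - s) ^ (2*H - 7/2 + 1) := Real.rpow_nonneg hLp.le _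
  have hc1 : (0:ℝ) ≤ 8/(2*n) * (1/(2*n*(-y₂))) :=
    mul_nonneg (div_nonneg (by norm_num) hn2.le) (one_div_nonneg.mpr hnv.le)
  have hP1 : (0:ℝ) ≤ (-y₂ - 1 - s) ^ (2*H - 7/2 + 1) / (-(2*H - 7/2) - 1) :=
    div_nonneg hLq hd.le
  have hc2 : (0:ℝ) ≤ 1/(2*n) * ((-y₂ - 1 - s) ^ (2*H - 7/2 + 1) / (-(2*H - 7/2) - 1)) :=
    mul_nonneg (one_div_nonneg.mpr hn2.le) hP1
  have hP2 : (0:ℝ) ≤ Real.exp (-(n*(-y₂) * (-y₂ - 1 - s))) / (n*(-y₂)) :=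
    div_nonneg (Real.exp_pos _).le (mul_pos hn hvp).le
  rw [← ENNReal.ofReal_mul hc1, ← ENNReal.ofReal_mul hc2,
    ← ENNReal.ofReal_add (mul_nonneg hc1 hP1) (mul_nonneg hc2 hP2),
    ← ENNReal.ofReal_mul (by positivity)]
  apply ENNReal.ofReal_le_ofReal
  have core := RS1 s H n (-y₂) hs hH1 hH2 hn (by linarith)
  calc t^2 * Real.sqrt (2+s) * Real.sqrt (-y₂) *
        (8/(2*n) * (1/(2*n*(-y₂))) * ((-y₂-1-s) ^ (2*H - 7/2 + 1) / (-(2*H - 7/2) - 1)) +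
         1/(2*n) * ((-y₂-1-s) ^ (2*H - 7/2 + 1) / (-(2*H - 7/2) - 1)) *
           (Real.exp (-(n*(-y₂)*(-y₂-1-s)))/(n*(-y₂))))
      = (t^2 * Real.sqrt (2+s)) * (Real.sqrt (-y₂) *
        (8/(2*n) * (1/(2*n*(-y₂))) * ((-y₂-1-s) ^ (2*H - 7/2 + 1) / (-(2*H - 7/2) - 1)) +
         1/(2*n) * ((-y₂-1-s) ^ (2*H - 7/2 + 1) / (-(2*H - 7/2) - 1)) *
           (Real.exp (-(n*(-y₂)*(-y₂-1-s)))/(n*(-y₂))))) := by ring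
    _ ≤ (t^2 * Real.sqrt (2+s)) * (5 * (2+s) ^ ((3:ℝ)/2) / n^2 * (-y₂) ^ (2*H - 3)) :=
        mul_le_mul_of_nonneg_left core (by positivity)
    _ = t^2 * Real.sqrt (2+s) * 5 * (2+s) ^ ((3:ℝ)/2) / n^2 * (-y₂) ^ (2*H - 3) := by ring

theorem int_Theta (s H t n : ℝ) (hs : 0 < s) (hH1 : 1/2 < H) (hH2 : H < 1) (hn : 0 < n)
    (ht0 : 0 ≤ t) :
    ∫⁻ y₂ : ℝ, Theta s H t n y₂ ≤ ENNReal.ofReal (3*(2+s)^2 * t^2 / ((1-H) * n^2)) := by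
  unfold Theta
  have ha0 : (0:ℝ) < 2 + s := by linarith
  have ha1 : (1:ℝ) ≤ 2 + s := by linarith
  have hn2 : (0:ℝ) < n^2 := pow_pos hn 2
  have hcnn : (0:ℝ) ≤ t^2 * Real.sqrt (2+s) * 5 * (2+s) ^ ((3:ℝ)/2) / n^2 := by
    apply div_nonneg _ hn2.le
    have := Real.rpow_nonneg ha0.le ((3:ℝ)/2)
    positivity
  rw [lint_neg_tail (2+s) _ (2*H - 3) (by linarith) (by linarith) hcnn]
  rw [← ENNReal.ofReal_mul hcnn]
  apply ENNReal.ofReal_le_ofReal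
  have hpow1 : (2+s) ^ (2*H - 3 + 1) ≤ 1 :=
    Real.rpow_le_one_of_one_le_of_nonpos ha1 (by linarith)
  have hd : (0:ℝ) < -(2*H - 3) - 1 := by linarith
  have hsq : Real.sqrt (2+s) * (2+s) ^ ((3:ℝ)/2) = (2+s)^2 := by
    rw [Real.sqrt_eq_rpow, ← Real.rpow_add ha0]
    rw [show (1:ℝ)/2 + 3/2 = ((2:ℕ):ℝ) by norm_num, Real.rpow_natCast]
  have hfrac : (2+s) ^ (2*H - 3 + 1) / (-(2*H - 3) - 1) ≤ 1 / (-(2*H - 3) - 1) :=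
    (div_le_div_iff_of_pos_right hd).mpr hpow1
  calc t^2 * Real.sqrt (2+s) * 5 * (2+s) ^ ((3:ℝ)/2) / n^2 *
        ((2+s) ^ (2*H - 3 + 1) / (-(2*H - 3) - 1))
      ≤ t^2 * Real.sqrt (2+s) * 5 * (2+s) ^ ((3:ℝ)/2) / n^2 * (1 / (-(2*H - 3) - 1)) :=
        mul_le_mul_of_nonneg_left hfrac hcnn
    _ = 5 * (Real.sqrt (2+s) * (2+s) ^ ((3:ℝ)/2)) * t^2 / (n^2 * (-(2*H - 3) - 1)) := by
        field_simp
    _ = 5 * (2+s)^2 * t^2 / (n^2 * (-(2*H - 3) - 1)) := by rw [hsq]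
    _ ≤ 3*(2+s)^2 * t^2 / ((1-H) * n^2) := by
        rw [div_le_div_iff₀ (mul_pos hn2 hd) (mul_pos (by linarith : (0:ℝ) < 1-H) hn2)]
        have hP : (0:ℝ) ≤ (2+s)^2 * t^2 * n^2 * (1-H) :=
          mul_nonneg (by positivity) (by linarith : (0:ℝ) ≤ 1-H)
        nlinarith [hP]

theorem inner_bound (s H t n : ℝ) (hs : 0 < s) (hH1 : 1/2 < H) (hH2 : H < 1)
    (hn : 0 < n) (ht0 : 0 ≤ t) (q₂ : ℝ × ℝ) :
    ∫⁻ q₁ : ℝ × ℝ, Tf s H t n (q₁, q₂) ≤ Psi s H t n q₂ := by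
  obtain ⟨x₂, y₂⟩ := q₂
  have hmeas : Measurable fun q₁ : ℝ × ℝ => Tf s H t n (q₁, (x₂, y₂)) :=
    (meas_Tf s H t n).comp measurable_prodMk_right
  rw [Measure.volume_eq_prod, lintegral_prod _ hmeas.aemeasurable]
  have step1 : ∀ x₁ : ℝ, ∫⁻ y₁ : ℝ, Tf s H t n ((x₁, y₁), (x₂, y₂))
      ≤ Wf s H t n x₂ y₂ x₁ := by
    intro x₁
    by_cases hco : y₂ ≤ -(2+s) ∧ -y₂ - 1 - s ≤ x₁ ∧ x₁ ≤ x₂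
    · have hx1p : (0:ℝ) < x₁ := by
        have h1 := hco.1; have h2 := hco.2.1; linarith
      have hTf : ∀ y₁ : ℝ, Tf s H t n ((x₁, y₁), (x₂, y₂))
          = ((if y₂ ≤ -(2+s) ∧ -y₂ - 1 - s ≤ x₁ ∧ x₁ ≤ x₂ then (1:ℝ≥0∞) else 0) *
              ENNReal.ofReal (t^2 * Real.sqrt (2+s) * Real.sqrt (-y₂) * x₁ ^ (2*H - 5/2) *
                Real.exp (-(2*n*(-y₂) * (x₂ - x₁))))) *
            ((if y₁ < y₂ then (1:ℝ≥0∞) else 0) *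
              ENNReal.ofReal (Real.exp (-(2*n*x₁ * (y₂ - y₁))))) := fun y₁ => rfl
    
      simp_rw [hTf]
      rw [lintegral_const_mul' _ _ ?hfin]
      case hfin =>
        apply ENNReal.mul_ne_top _ ENNReal.ofReal_ne_top
        split <;> simp
      have hy1int : ∫⁻ y₁ : ℝ, (if y₁ < y₂ then (1:ℝ≥0∞) else 0) *
          ENNReal.ofReal (Real.exp (-(2*n*x₁ * (y₂ - y₁)))) ≤ ENNReal.ofReal (1/(2*n*x₁)) := by
        rw [← lint_exp_le (2*n*x₁) y₂ (by positivity)]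
        apply lintegral_mono
        intro y₁
        apply mul_le_mul_left
        split <;> split <;> simp_all
        intros; linarith
      calc _ ≤ ((if y₂ ≤ -(2+s) ∧ -y₂ - 1 - s ≤ x₁ ∧ x₁ ≤ x₂ then (1:ℝ≥0∞) else 0) *
            ENNReal.ofReal (t^2 * Real.sqrt (2+s) * Real.sqrt (-y₂) * x₁ ^ (2*H - 5/2) *
              Real.exp (-(2*n*(-y₂) * (x₂ - x₁))))) * ENNReal.ofReal (1/(2*n*x₁)) :=
          mul_le_mul_right hy1int _
        _ ≤ Wf s H t n x₂ y₂ x₁ := S3pt s H t n x₂ y₂ x₁ hs hH1 hH2 hn ht0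
    · have hTf0 : ∀ y₁ : ℝ, Tf s H t n ((x₁, y₁), (x₂, y₂)) = 0 := by
        intro y₁
        rw [Tf]
        simp only []
        rw [if_neg hco, zero_mul, zero_mul]
      simp only [hTf0, lintegral_zero]
      exact zero_le'
  calc ∫⁻ x₁ : ℝ, ∫⁻ y₁ : ℝ, Tf s H t n ((x₁, y₁), (x₂, y₂))
      ≤ ∫⁻ x₁ : ℝ, Wf s H t n x₂ y₂ x₁ := lintegral_mono step1
    _ ≤ Psi s H t n (x₂, y₂) := int_Wf s H t n x₂ y₂ hs hH2 hn

theorem key (s H t n : ℝ) (hs : 0 < s) (hH1 : 1/2 < H) (hH2 : H < 1)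
    (hn : 0 < n) (ht0 : 0 ≤ t) :
    ∫⁻ p : (ℝ × ℝ) × ℝ × ℝ, Tf s H t n p
      ≤ ENNReal.ofReal (3*(2+s)^2 * t^2 / ((1-H) * n^2)) := by
  rw [Measure.volume_eq_prod, lintegral_prod_symm _ (meas_Tf s H t n).aemeasurable]
  calc ∫⁻ q₂ : ℝ × ℝ, ∫⁻ q₁ : ℝ × ℝ, Tf s H t n (q₁, q₂)
      ≤ ∫⁻ q₂ : ℝ × ℝ, Psi s H t n q₂ :=
        lintegral_mono fun q₂ => inner_bound s H t n hs hH1 hH2 hn ht0 q₂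
    _ = ∫⁻ y₂ : ℝ, ∫⁻ x₂ : ℝ, Psi s H t n (x₂, y₂) := by
        rw [Measure.volume_eq_prod, lintegral_prod_symm _ (meas_Psi s H t n).aemeasurable]
    _ ≤ ∫⁻ y₂ : ℝ, Theta s H t n y₂ :=
        lintegral_mono fun y₂ => int_Psi s H t n hs hH1 hH2 hn y₂
    _ ≤ ENNReal.ofReal (3*(2+s)^2 * t^2 / ((1-H) * n^2)) :=
        int_Theta s H t n hs hH1 hH2 hn ht0

theorem Fpt (s H t n M x₁ y₁ x₂ y₂ : ℝ) (hs : 0 < s) (hH1 : 1/2 < H) (hH2 : H < 1)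
    (ht0 : 0 ≤ t) (ht1 : t ≤ 1) (hM : M ≤ -2 - s)
    (h1 : 0 < x₁) (h2 : x₁ ≤ x₂) (h3 : y₁ < y₂) (h4 : y₂ ≤ 0) :
    ENNReal.ofReal ‖(if -t - s - y₁ < x₁ ∧ y₁ ≤ M then gker s t x₁ y₁ / x₁ ^ (2 - H) else 0) *
      (if -t - s - y₂ < x₂ ∧ y₂ ≤ M then gker s t x₂ y₂ / x₂ ^ (2 - H) else 0) *
      Real.sqrt (x₁ * |y₁|) * Real.sqrt (x₂ * |y₂|) *
      Real.exp (-2 * n * (x₁ * (y₂ - y₁) - (x₂ - x₁) * y₂))‖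
    ≤ Tf s H t n ((x₁, y₁), (x₂, y₂)) := by
  by_cases hc1 : -t - s - y₁ < x₁ ∧ y₁ ≤ M
  case neg => rw [if_neg hc1]; simp
  by_cases hc2 : -t - s - y₂ < x₂ ∧ y₂ ≤ M
  case neg => rw [if_neg hc2]; simp
  rw [if_pos hc1, if_pos hc2]
  -- basic facts
  have hy2 : y₂ ≤ -(2+s) := by linarith [hc2.2]
  have hLx : -y₂ - 1 - s ≤ x₁ := by linarith [hc1.1]
  have hx1 : (1:ℝ) ≤ x₁ := by linarith
  have hx2 : (1:ℝ) ≤ x₂ := le_trans hx1 h2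
  have hx2p : (0:ℝ) < x₂ := by linarith
  have hy1neg : y₁ < 0 := by linarith
  have hy2neg : y₂ < 0 := by linarith
  have hay1 : |y₁| = -y₁ := abs_of_neg hy1neg
  have hay2 : |y₂| = -y₂ := abs_of_neg hy2neg
  have hw : -y₁ ≤ (2+s) * x₁ := by nlinarith [hc1.1, mul_nonneg (by linarith : (0:ℝ) ≤ 1+s) (by linarith : (0:ℝ) ≤ x₁ - 1)]
  -- f bounds
  have hf1nn : 0 ≤ gker s t x₁ y₁ / x₁ ^ (2 - H) :=
    div_nonneg (gker_nonneg hs.le ht0 _ _) (Real.rpow_nonneg h1.le _)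
  have hf2nn : 0 ≤ gker s t x₂ y₂ / x₂ ^ (2 - H) :=
    div_nonneg (gker_nonneg hs.le ht0 _ _) (Real.rpow_nonneg hx2p.le _)
  have hf1 : gker s t x₁ y₁ / x₁ ^ (2 - H) ≤ t * x₁ ^ (H - 2) := by
    have h := (div_le_div_iff_of_pos_right (Real.rpow_pos_of_pos h1 (2 - H))).mpr (gker_le (s := s) ht0 x₁ y₁)
    calc gker s t x₁ y₁ / x₁ ^ (2 - H) ≤ t / x₁ ^ (2 - H) := h
      _ = t * x₁ ^ (H - 2) := by
          rw [show H - 2 = -(2 - H) by ring, Real.rpow_neg h1.le, div_eq_mul_inv]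
  have hf2 : gker s t x₂ y₂ / x₂ ^ (2 - H) ≤ t * x₂ ^ (H - 2) := by
    have h := (div_le_div_iff_of_pos_right (Real.rpow_pos_of_pos hx2p (2 - H))).mpr (gker_le (s := s) ht0 x₂ y₂)
    calc gker s t x₂ y₂ / x₂ ^ (2 - H) ≤ t / x₂ ^ (2 - H) := h
      _ = t * x₂ ^ (H - 2) := by
          rw [show H - 2 = -(2 - H) by ring, Real.rpow_neg hx2p.le, div_eq_mul_inv]
  -- rewrite Tf
  have hTf : Tf s H t n ((x₁, y₁), (x₂, y₂))
      = ((if y₂ ≤ -(2+s) ∧ -y₂ - 1 - s ≤ x₁ ∧ x₁ ≤ x₂ then (1:ℝ≥0∞) else 0) *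
          ENNReal.ofReal (t^2 * Real.sqrt (2+s) * Real.sqrt (-y₂) * x₁ ^ (2*H - 5/2) *
            Real.exp (-(2*n*(-y₂) * (x₂ - x₁))))) *
        ((if y₁ < y₂ then (1:ℝ≥0∞) else 0) *
          ENNReal.ofReal (Real.exp (-(2*n*x₁ * (y₂ - y₁))))) := rfl
  rw [hTf, if_pos ⟨hy2, hLx, h2⟩, if_pos h3, one_mul, one_mul,
    ← ENNReal.ofReal_mul' (Real.exp_pos _).le]
  -- the product of the two exponentials is the original exponential
  have hEE : Real.exp (-(2*n*(-y₂) * (x₂ - x₁))) * Real.exp (-(2*n*x₁ * (y₂ - y₁)))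
      = Real.exp (-2 * n * (x₁ * (y₂ - y₁) - (x₂ - x₁) * y₂)) := by
    rw [← Real.exp_add]; congr 1; ring
  -- nonnegativity of the integrand
  have hPnn : 0 ≤ gker s t x₁ y₁ / x₁ ^ (2 - H) * (gker s t x₂ y₂ / x₂ ^ (2 - H)) *
      Real.sqrt (x₁ * |y₁|) * Real.sqrt (x₂ * |y₂|) *
      Real.exp (-2 * n * (x₁ * (y₂ - y₁) - (x₂ - x₁) * y₂)) := by
    have := Real.sqrt_nonneg (x₁ * |y₁|)
    have := Real.sqrt_nonneg (x₂ * |y₂|)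
    have := (Real.exp_pos (-2 * n * (x₁ * (y₂ - y₁) - (x₂ - x₁) * y₂))).le
    positivity
  rw [Real.norm_of_nonneg hPnn]
  apply ENNReal.ofReal_le_ofReal
  rw [mul_comm (t^2 * Real.sqrt (2+s) * Real.sqrt (-y₂) * x₁ ^ (2*H - 5/2) *
    Real.exp (-(2*n*(-y₂) * (x₂ - x₁)))) (Real.exp (-(2*n*x₁ * (y₂ - y₁))))]
  have hEE' : Real.exp (-(2*n*x₁ * (y₂ - y₁))) *
      (t^2 * Real.sqrt (2+s) * Real.sqrt (-y₂) * x₁ ^ (2*H - 5/2) *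
        Real.exp (-(2*n*(-y₂) * (x₂ - x₁))))
      = (t^2 * Real.sqrt (2+s) * Real.sqrt (-y₂) * x₁ ^ (2*H - 5/2)) *
        Real.exp (-2 * n * (x₁ * (y₂ - y₁) - (x₂ - x₁) * y₂)) := by
    rw [← hEE]; ring
  rw [hEE']
  apply mul_le_mul_of_nonneg_right _ (Real.exp_pos _).le
  -- core product inequality
  have hs1 : Real.sqrt (x₁ * |y₁|) = Real.sqrt x₁ * Real.sqrt (-y₁) := by
    rw [Real.sqrt_mul h1.le, hay1]
  have hs2 : Real.sqrt (x₂ * |y₂|) = Real.sqrt x₂ * Real.sqrt (-y₂) := by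
    rw [Real.sqrt_mul hx2p.le, hay2]
  have hsw : Real.sqrt (-y₁) ≤ Real.sqrt (2+s) * Real.sqrt x₁ := by
    rw [← Real.sqrt_mul (by linarith : (0:ℝ) ≤ 2+s)]
    exact Real.sqrt_le_sqrt hw
  have step1 : gker s t x₁ y₁ / x₁ ^ (2 - H) * (gker s t x₂ y₂ / x₂ ^ (2 - H)) *
      Real.sqrt (x₁ * |y₁|) * Real.sqrt (x₂ * |y₂|)
      ≤ (t * x₁ ^ (H - 2)) * (t * x₂ ^ (H - 2)) *
        (Real.sqrt x₁ * (Real.sqrt (2+s) * Real.sqrt x₁)) * (Real.sqrt x₂ * Real.sqrt (-y₂)) := by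
    rw [hs1, hs2]
    have b1 : gker s t x₁ y₁ / x₁ ^ (2 - H) * (gker s t x₂ y₂ / x₂ ^ (2 - H))
        ≤ (t * x₁ ^ (H - 2)) * (t * x₂ ^ (H - 2)) :=
      mul_le_mul hf1 hf2 hf2nn (by positivity)
    have b2 : Real.sqrt x₁ * Real.sqrt (-y₁) ≤ Real.sqrt x₁ * (Real.sqrt (2+s) * Real.sqrt x₁) :=
      mul_le_mul_of_nonneg_left hsw (Real.sqrt_nonneg _)
    have b3 : gker s t x₁ y₁ / x₁ ^ (2 - H) * (gker s t x₂ y₂ / x₂ ^ (2 - H)) *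
        (Real.sqrt x₁ * Real.sqrt (-y₁))
        ≤ (t * x₁ ^ (H - 2)) * (t * x₂ ^ (H - 2)) *
          (Real.sqrt x₁ * (Real.sqrt (2+s) * Real.sqrt x₁)) :=
      mul_le_mul b1 b2 (by positivity) (by positivity)
    exact mul_le_mul_of_nonneg_right b3 (by positivity)
  have ex1 : x₁ ^ (H - 2) * (Real.sqrt x₁ * Real.sqrt x₁) = x₁ ^ (H - 1) := by
    rw [Real.mul_self_sqrt h1.le, show H - 1 = (H - 2) + 1 by ring, Real.rpow_add_one h1.ne']
  have ex2 : x₂ ^ (H - 2) * Real.sqrt x₂ = x₂ ^ (H - 3/2) := by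
    rw [Real.sqrt_eq_rpow, ← Real.rpow_add hx2p]
    congr 1; ring
  have ex3 : x₂ ^ (H - 3/2) ≤ x₁ ^ (H - 3/2) :=
    Real.rpow_le_rpow_of_nonpos h1 h2 (by linarith)
  have ex4 : x₁ ^ (H - 1) * x₁ ^ (H - 3/2) = x₁ ^ (2*H - 5/2) := by
    rw [← Real.rpow_add h1]; congr 1; ring
  calc gker s t x₁ y₁ / x₁ ^ (2 - H) * (gker s t x₂ y₂ / x₂ ^ (2 - H)) *
        Real.sqrt (x₁ * |y₁|) * Real.sqrt (x₂ * |y₂|)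
      ≤ (t * x₁ ^ (H - 2)) * (t * x₂ ^ (H - 2)) *
        (Real.sqrt x₁ * (Real.sqrt (2+s) * Real.sqrt x₁)) * (Real.sqrt x₂ * Real.sqrt (-y₂)) :=
      step1
    _ = (t^2 * Real.sqrt (2+s) * Real.sqrt (-y₂)) *
        (x₁ ^ (H - 2) * (Real.sqrt x₁ * Real.sqrt x₁)) * (x₂ ^ (H - 2) * Real.sqrt x₂) := by
      ring
    _ = (t^2 * Real.sqrt (2+s) * Real.sqrt (-y₂)) * x₁ ^ (H - 1) * x₂ ^ (H - 3/2) := by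
      rw [ex1, ex2]
    _ ≤ (t^2 * Real.sqrt (2+s) * Real.sqrt (-y₂)) * x₁ ^ (H - 1) * x₁ ^ (H - 3/2) := by
      apply mul_le_mul_of_nonneg_left ex3
      have := Real.rpow_nonneg h1.le (H - 1)
      positivity
    _ = t^2 * Real.sqrt (2+s) * Real.sqrt (-y₂) * x₁ ^ (2*H - 5/2) := by
      rw [mul_assoc, ex4]


end

/-- For fixed `s > 0` there is a constant `C > 0`, independent of
`t`, `M`, `H` and `n`, such that for all `H ∈ (1/2,1)`, `t ∈ [0,1]`, `M ≤ −2−s` and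
`n > 0`, with `φ̄_t = φ_t · 1_{Ḡ(M)}`, `Ḡ(M) = {−t−s−y < x, y ≤ M}` and
`K₂ = 1/(4(1−H)(3−2H)(2H−1))`, one has `I₂(n, φ̄_t) ≤ K₂ C t^{2H}`. -/
theorem stmt12 {s : ℝ} (hs : 0 < s) :
    ∃ C : ℝ, 0 < C ∧ ∀ H ∈ Set.Ioo (1 / 2 : ℝ) 1, ∀ t ∈ Set.Icc (0 : ℝ) 1,
      ∀ M : ℝ, M ≤ -2 - s → ∀ n : ℝ, 0 < n →
        I2 n (fun x y =>
            if -t - s - y < x ∧ y ≤ M then gker s t x y / x ^ (2 - H) else 0)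
          ≤ 1 / (4 * (1 - H) * (3 - 2 * H) * (2 * H - 1)) * C * t ^ (2 * H) := by
  refine ⟨24*(2+s)^2, by positivity, ?_⟩
  rintro H ⟨hH1, hH2⟩ t ⟨ht0, ht1⟩ M hM n hn
  have hSmeas : MeasurableSet {p : (ℝ × ℝ) × ℝ × ℝ |
      0 < p.1.1 ∧ p.1.1 ≤ p.2.1 ∧ p.1.2 < p.2.2 ∧ p.2.2 ≤ 0} := by
    simp only [Set.setOf_and]
    refine MeasurableSet.inter ?_ (MeasurableSet.inter ?_ (MeasurableSet.inter ?_ ?_))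
    · exact measurableSet_lt measurable_const (by fun_prop)
    · exact measurableSet_le (by fun_prop) (by fun_prop)
    · exact measurableSet_lt (by fun_prop) (by fun_prop)
    · exact measurableSet_le (by fun_prop) measurable_const
  have hnn : (0:ℝ) ≤ 3*(2+s)^2 * t^2 / ((1-H) * n^2) :=
    div_nonneg (by positivity) (mul_nonneg (by linarith) (sq_nonneg n))
  have h0 : (∫ p in {p : (ℝ × ℝ) × ℝ × ℝ |
      0 < p.1.1 ∧ p.1.1 ≤ p.2.1 ∧ p.1.2 < p.2.2 ∧ p.2.2 ≤ 0},
      (if -t - s - p.1.2 < p.1.1 ∧ p.1.2 ≤ M then gker s t p.1.1 p.1.2 / p.1.1 ^ (2 - H) else 0) *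
      (if -t - s - p.2.2 < p.2.1 ∧ p.2.2 ≤ M then gker s t p.2.1 p.2.2 / p.2.1 ^ (2 - H) else 0) *
      Real.sqrt (p.1.1 * |p.1.2|) * Real.sqrt (p.2.1 * |p.2.2|) *
      Real.exp (-2 * n * (p.1.1 * (p.2.2 - p.1.2) - (p.2.1 - p.1.1) * p.2.2)))
      ≤ 3*(2+s)^2 * t^2 / ((1-H) * n^2) := by
    have hlin : (∫⁻ p in {p : (ℝ × ℝ) × ℝ × ℝ |
        0 < p.1.1 ∧ p.1.1 ≤ p.2.1 ∧ p.1.2 < p.2.2 ∧ p.2.2 ≤ 0},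
        ENNReal.ofReal ‖(if -t - s - p.1.2 < p.1.1 ∧ p.1.2 ≤ M then
            gker s t p.1.1 p.1.2 / p.1.1 ^ (2 - H) else 0) *
          (if -t - s - p.2.2 < p.2.1 ∧ p.2.2 ≤ M then
            gker s t p.2.1 p.2.2 / p.2.1 ^ (2 - H) else 0) *
          Real.sqrt (p.1.1 * |p.1.2|) * Real.sqrt (p.2.1 * |p.2.2|) *
          Real.exp (-2 * n * (p.1.1 * (p.2.2 - p.1.2) - (p.2.1 - p.1.1) * p.2.2))‖)
        ≤ ENNReal.ofReal (3*(2+s)^2 * t^2 / ((1-H) * n^2)) := by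
      rw [← lintegral_indicator hSmeas]
      refine le_trans (lintegral_mono ?_) (key s H t n hs hH1 hH2 hn ht0)
      intro p
      by_cases hp : p ∈ {p : (ℝ × ℝ) × ℝ × ℝ |
          0 < p.1.1 ∧ p.1.1 ≤ p.2.1 ∧ p.1.2 < p.2.2 ∧ p.2.2 ≤ 0}
      · rw [Set.indicator_of_mem hp]
        obtain ⟨hp1, hp2, hp3, hp4⟩ := hp
        exact Fpt s H t n M p.1.1 p.1.2 p.2.1 p.2.2 hs hH1 hH2 ht0 ht1 hM hp1 hp2 hp3 hp4
      · rw [Set.indicator_of_notMem hp]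
        exact zero_le'
    refine le_trans (le_trans (by rw [Real.norm_eq_abs]; exact le_abs_self _ :
        (∫ p in {p : (ℝ × ℝ) × ℝ × ℝ |
          0 < p.1.1 ∧ p.1.1 ≤ p.2.1 ∧ p.1.2 < p.2.2 ∧ p.2.2 ≤ 0},
          (if -t - s - p.1.2 < p.1.1 ∧ p.1.2 ≤ M then
            gker s t p.1.1 p.1.2 / p.1.1 ^ (2 - H) else 0) *
          (if -t - s - p.2.2 < p.2.1 ∧ p.2.2 ≤ M then
            gker s t p.2.1 p.2.2 / p.2.1 ^ (2 - H) else 0) *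
          Real.sqrt (p.1.1 * |p.1.2|) * Real.sqrt (p.2.1 * |p.2.2|) *
          Real.exp (-2 * n * (p.1.1 * (p.2.2 - p.1.2) - (p.2.1 - p.1.1) * p.2.2)))
        ≤ ‖∫ p in {p : (ℝ × ℝ) × ℝ × ℝ |
          0 < p.1.1 ∧ p.1.1 ≤ p.2.1 ∧ p.1.2 < p.2.2 ∧ p.2.2 ≤ 0},
          (if -t - s - p.1.2 < p.1.1 ∧ p.1.2 ≤ M then
            gker s t p.1.1 p.1.2 / p.1.1 ^ (2 - H) else 0) *
          (if -t - s - p.2.2 < p.2.1 ∧ p.2.2 ≤ M then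
            gker s t p.2.1 p.2.2 / p.2.1 ^ (2 - H) else 0) *
          Real.sqrt (p.1.1 * |p.1.2|) * Real.sqrt (p.2.1 * |p.2.2|) *
          Real.exp (-2 * n * (p.1.1 * (p.2.2 - p.1.2) - (p.2.1 - p.1.1) * p.2.2))‖)
      (norm_integral_le_lintegral_norm _)) ?_
    exact ENNReal.toReal_le_of_le_ofReal hnn hlin
  unfold I2
  refine le_trans (mul_le_mul_of_nonneg_left h0 (sq_nonneg n)) ?_
  have hn0 : n ≠ 0 := ne_of_gt hn
  have h1H0 : (1:ℝ) - H ≠ 0 := ne_of_gt (by linarith)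
  have heq : n^2 * (3*(2+s)^2 * t^2 / ((1-H) * n^2)) = 3*(2+s)^2*t^2/(1-H) := by
    field_simp
  rw [heq]
  have htt : t^2 ≤ t^(2*H) := by
    rcases eq_or_lt_of_le ht0 with h|h
    · rw [← h, Real.zero_rpow (by positivity : (2*H:ℝ) ≠ 0)]
      norm_num
    · have h2 : t ^ ((2:ℝ)) ≤ t ^ (2*H) :=
        Real.rpow_le_rpow_of_exponent_ge h ht1 (by linarith)
      rwa [Real.rpow_two] at h2
  have hD : (0:ℝ) < 4*(1-H)*(3-2*H)*(2*H-1) :=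
    mul_pos (mul_pos (mul_pos (by norm_num) (by linarith)) (by linarith)) (by linarith)
  have hB : (3-2*H)*(2*H-1) ≤ 2 := by nlinarith [sq_nonneg (2*H-2)]
  have hcoef : 3*(2+s)^2/(1-H) ≤ 1/(4*(1-H)*(3-2*H)*(2*H-1)) * (24*(2+s)^2) := by
    rw [one_div, inv_mul_eq_div, div_le_div_iff₀ (by linarith : (0:ℝ) < 1-H) hD]
    have hkey := mul_le_mul_of_nonneg_left hB
      (mul_nonneg (sq_nonneg (2+s)) (by linarith : (0:ℝ) ≤ 1-H))
    nlinarith [hkey]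
  calc 3*(2+s)^2*t^2/(1-H) ≤ 3*(2+s)^2*t^(2*H)/(1-H) := by
        apply (div_le_div_iff_of_pos_right (by linarith : (0:ℝ) < 1-H)).mpr
        nlinarith [htt, sq_nonneg (2+s)]
    _ = (3*(2+s)^2/(1-H)) * t^(2*H) := by ring
    _ ≤ (1/(4*(1-H)*(3-2*H)*(2*H-1)) * (24*(2+s)^2)) * t^(2*H) :=
        mul_le_mul_of_nonneg_right hcoef (Real.rpow_nonneg ht0 _)
    _ = 1/(4*(1-H)*(3-2*H)*(2*H-1)) * (24*(2+s)^2) * t^(2*H) := by ring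
end

section
/- Fix H ∈ (1/2,1) and s > 0, and let C_H = H(2H−1)(1−H)(3−2H). Then for every t ≥ 0, C_H ∫₀^∞ ∫_{−∞}^0 g_s(t,x,y)² · x^{2H−4} dx dy = t^{2H} / 2. -/
open MeasureTheory ProbabilityTheory Filter Topology

noncomputable def clamp (t x v : ℝ) : ℝ := max 0 (min (min v (min t x)) (t + x - v))

lemma hker_aux {t x : ℝ} (ht : 0 ≤ t) (hx : 0 < x) (v : ℝ) :
    max (min (t - v) 0 + x) 0 - max (min (-v) 0 + x) 0
      = max 0 (min (min v (min t x)) (t + x - v)) := by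
  rcases le_total v 0 with h0 | h0
  · rw [min_eq_right (by linarith : (0:ℝ) ≤ t - v),
        min_eq_right (by linarith : (0:ℝ) ≤ -v), zero_add,
        max_eq_left hx.le,
        max_eq_left (le_trans (min_le_left _ _) (le_trans (min_le_left _ _) h0))]
    ring
  · rw [min_eq_left (neg_nonpos_of_nonneg h0)]
    rcases le_total v t with h1 | h1
    · rw [min_eq_right (by linarith : (0:ℝ) ≤ t - v), zero_add, max_eq_left hx.le]
      rcases le_total v x with h2 | h2
      · rw [max_eq_left (by linarith : (0:ℝ) ≤ -v + x),
            min_eq_left (le_min h1 h2), min_eq_left (by linarith : v ≤ t + x - v),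
            max_eq_right h0]
        ring
      · rw [max_eq_right (by linarith : -v + x ≤ 0),
            min_eq_right (by linarith : x ≤ t),
            min_eq_right h2,
            min_eq_left (by linarith : x ≤ t + x - v),
            max_eq_right hx.le]
        ring
    · rw [min_eq_left (by linarith : t - v ≤ 0)]
      rcases le_total v x with h2 | h2
      · rw [max_eq_left (by linarith : (0:ℝ) ≤ t - v + x),
            max_eq_left (by linarith : (0:ℝ) ≤ -v + x),
            min_eq_left (by linarith : t ≤ x),
            min_eq_right h1,
            min_eq_left (by linarith : t ≤ t + x - v),
            max_eq_right ht]
        ring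
      · rw [max_eq_right (by linarith : -v + x ≤ 0)]
        rcases le_total v (t + x) with h3 | h3
        · rw [max_eq_left (by linarith : (0:ℝ) ≤ t - v + x),
              min_eq_right (le_trans (min_le_left t x) h1),
              min_eq_right (le_min (by linarith) (by linarith)),
              max_eq_right (by linarith : (0:ℝ) ≤ t + x - v)]
          ring
        · rw [max_eq_right (by linarith : t - v + x ≤ 0),
              max_eq_left (le_trans (min_le_right _ _) (by linarith : t + x - v ≤ 0))]
          ring

lemma gker_eq_clamp {t x : ℝ} (ht : 0 ≤ t) (hx : 0 < x) (s y : ℝ) :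
    gker s t x y = clamp t x (-s - y) := by
  have h := hker_aux ht hx (-s - y)
  unfold gker hker clamp
  have e1 : t - (-s - y) = t + s + y := by ring
  have e2 : -(-s - y) = s + y := by ring
  rw [e1, e2] at h
  linarith [h]

lemma continuous_clamp (t x : ℝ) : Continuous (clamp t x) := by
  unfold clamp; fun_prop

lemma integral_clamp_sq {t x : ℝ} (ht : 0 ≤ t) (hx : 0 < x) :
    ∫ v, (clamp t x v) ^ 2 = (min t x) ^ 2 * max t x - (min t x) ^ 3 / 3 := by
  have hm0 : 0 ≤ min t x := le_min ht hx.le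
  have hmM : min t x ≤ max t x := min_le_max
  have hsum : min t x + max t x = t + x := min_add_max t x
  set m := min t x with hm
  set M := max t x with hM
  have h0tx : (0:ℝ) ≤ t + x := by linarith
  have hzero : ∀ v ∉ Set.Ioc (0:ℝ) (t + x), clamp t x v ^ 2 = 0 := by
    intro v hv
    rw [Set.mem_Ioc, not_and_or] at hv
    have hc : clamp t x v = 0 := by
      rcases hv with hv | hv
      · push_neg at hv
        exact max_eq_left (le_trans (min_le_left _ _) (le_trans (min_le_left _ _) hv))
      · push_neg at hv
        exact max_eq_left (le_trans (min_le_right _ _) (by linarith))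
    rw [hc]; ring
  rw [← setIntegral_eq_integral_of_forall_compl_eq_zero hzero,
      ← intervalIntegral.integral_of_le h0tx]
  have hcont : ∀ a b : ℝ, IntervalIntegrable (fun v => clamp t x v ^ 2) volume a b :=
    fun a b => ((continuous_clamp t x).pow 2).intervalIntegrable a b
  rw [← intervalIntegral.integral_add_adjacent_intervals (hcont 0 m) (hcont m (t + x)),
      ← intervalIntegral.integral_add_adjacent_intervals (hcont m M) (hcont M (t + x))]
  have P1 : (∫ v in (0:ℝ)..m, clamp t x v ^ 2) = m ^ 3 / 3 := by
    rw [intervalIntegral.integral_congr (g := fun v => v ^ 2) ?_, integral_pow]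
    · norm_num
    · intro v hv
      rw [Set.uIcc_of_le hm0, Set.mem_Icc] at hv
      simp only
      unfold clamp
      rw [← hm, min_eq_left hv.2, min_eq_left (by linarith [hv.1, hv.2] : v ≤ t + x - v),
          max_eq_right hv.1]
  have P2 : (∫ v in m..M, clamp t x v ^ 2) = (M - m) * m ^ 2 := by
    rw [intervalIntegral.integral_congr (g := fun _ => m ^ 2) ?_,
        intervalIntegral.integral_const, smul_eq_mul]
    intro v hv
    rw [Set.uIcc_of_le hmM, Set.mem_Icc] at hv
    simp only
    unfold clamp
    rw [← hm, min_eq_right hv.1, min_eq_left (by linarith [hv.2] : m ≤ t + x - v),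
        max_eq_right hm0]
  have P3 : (∫ v in M..(t + x), clamp t x v ^ 2) = m ^ 3 / 3 := by
    rw [intervalIntegral.integral_congr (g := fun v => (t + x - v) ^ 2) ?_]
    · rw [intervalIntegral.integral_comp_sub_left (fun u => u ^ 2) (t + x),
          show t + x - (t + x) = (0:ℝ) by ring, show t + x - M = m by linarith,
          integral_pow]
      norm_num
    · intro v hv
      rw [Set.uIcc_of_le (by linarith : M ≤ t + x), Set.mem_Icc] at hv
      simp only
      unfold clamp
      rw [← hm, min_eq_right (by linarith [hv.1] : m ≤ v),
          min_eq_right (by linarith [hv.1] : t + x - v ≤ m),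
          max_eq_right (by linarith [hv.2] : (0:ℝ) ≤ t + x - v)]
  rw [P1, P2, P3]; ring

lemma inner_integral {t x s : ℝ} (ht : 0 ≤ t) (hx : 0 < x) (hs : 0 < s) :
    ∫ y in Set.Iic (0:ℝ), (gker s t x y) ^ 2
      = (min t x) ^ 2 * max t x - (min t x) ^ 3 / 3 := by
  have h1 : ∀ y : ℝ, (gker s t x y) ^ 2 = (fun v => clamp t x v ^ 2) (-s - y) := fun y => by
    simp only [gker_eq_clamp ht hx s y]
  simp only [h1]
  rw [setIntegral_eq_integral_of_forall_compl_eq_zero]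
  · rw [integral_sub_left_eq_self (fun v => clamp t x v ^ 2) volume (-s)]
    exact integral_clamp_sq ht hx
  · intro y hy
    simp only [Set.mem_Iic, not_le] at hy
    have hc : clamp t x (-s - y) = 0 :=
      max_eq_left (le_trans (min_le_left _ _) (le_trans (min_le_left _ _) (by linarith)))
    simp [hc]

lemma outer_integral {H t : ℝ} (hH1 : 1/2 < H) (hH2 : H < 1) (ht : 0 < t) :
    ∫ x in Set.Ioi (0:ℝ),
        ((min t x) ^ 2 * max t x - (min t x) ^ 3 / 3) * x ^ (2*H - 4)
      = t ^ (2*H) * (1/(2*H-1) - 1/(6*H) + 1/(2-2*H) + 1/(3*(2*H-3))) := by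
  have h1 : (-1:ℝ) < 2*H - 2 := by linarith
  have h2 : (-1:ℝ) < 2*H - 1 := by linarith
  have h3 : 2*H - 3 < (-1:ℝ) := by linarith
  have h4 : 2*H - 4 < (-1:ℝ) := by linarith
  set f : ℝ → ℝ := fun x => ((min t x) ^ 2 * max t x - (min t x) ^ 3 / 3) * x ^ (2*H-4) with hf
  have heq1 : Set.EqOn (fun x : ℝ => t * x ^ (2*H-2) - x ^ (2*H-1) / 3) f (Set.Ioc 0 t) := by
    intro x hx
    rw [Set.mem_Ioc] at hx
    have e2 : x ^ (2*H-2) = x ^ (2:ℕ) * x ^ (2*H-4) := by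
      rw [← Real.rpow_natCast x 2, ← Real.rpow_add hx.1]
      norm_num
      congr 1
      ring
    have e3 : x ^ (2*H-1) = x ^ (3:ℕ) * x ^ (2*H-4) := by
      rw [← Real.rpow_natCast x 3, ← Real.rpow_add hx.1]
      norm_num
      congr 1
      ring
    simp only [hf, min_eq_right hx.2, max_eq_left hx.2, e2, e3]
    ring
  have heq2 : Set.EqOn (fun x : ℝ => t^2 * x ^ (2*H-3) - t^3/3 * x ^ (2*H-4)) f (Set.Ioi t) := by
    intro x hx
    rw [Set.mem_Ioi] at hx
    have hx0 : 0 < x := ht.trans hx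
    have e2 : x ^ (2*H-3) = x * x ^ (2*H-4) := by
      rw [show (2*H-3:ℝ) = 1 + (2*H-4) by ring, Real.rpow_add hx0, Real.rpow_one]
    simp only [hf, min_eq_left hx.le, max_eq_right hx.le, e2]
    ring
  have hint1 : IntervalIntegrable (fun x : ℝ => t * x ^ (2*H-2) - x ^ (2*H-1) / 3) volume 0 t :=
    ((intervalIntegral.intervalIntegrable_rpow' h1).const_mul t).sub
      ((intervalIntegral.intervalIntegrable_rpow' h2).div_const 3)
  have i1 : IntegrableOn (fun x : ℝ => x ^ (2*H-3)) (Set.Ioi t) := integrableOn_Ioi_rpow_of_lt h3 ht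
  have i2 : IntegrableOn (fun x : ℝ => x ^ (2*H-4)) (Set.Ioi t) := integrableOn_Ioi_rpow_of_lt h4 ht
  have hfi1 : IntegrableOn f (Set.Ioc 0 t) volume := by
    apply MeasureTheory.IntegrableOn.congr_fun ?_ heq1 measurableSet_Ioc
    exact (intervalIntegrable_iff_integrableOn_Ioc_of_le ht.le).mp hint1
  have hfi2 : IntegrableOn f (Set.Ioi t) volume := by
    apply MeasureTheory.IntegrableOn.congr_fun ?_ heq2 measurableSet_Ioi
    exact (i1.const_mul (t^2)).sub (i2.const_mul (t^3/3))
  rw [← Set.Ioc_union_Ioi_eq_Ioi ht.le,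
      setIntegral_union (Set.Ioc_disjoint_Ioi le_rfl) measurableSet_Ioi hfi1 hfi2]
  have ht1 : (2*H-1:ℝ) ≠ 0 := by linarith
  have ht0 : (2*H:ℝ) ≠ 0 := by linarith
  have ht2 : (2*H-2:ℝ) ≠ 0 := by linarith
  have ht3 : (2*H-3:ℝ) ≠ 0 := by linarith
  have V1 : ∫ x in Set.Ioc (0:ℝ) t, f x = t^(2*H) * (1/(2*H-1) - 1/(6*H)) := by
    rw [← setIntegral_congr_fun measurableSet_Ioc heq1,
        ← intervalIntegral.integral_of_le ht.le,
        intervalIntegral.integral_sub ((intervalIntegral.intervalIntegrable_rpow' h1).const_mul t)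
          ((intervalIntegral.intervalIntegrable_rpow' h2).div_const 3),
        intervalIntegral.integral_const_mul, intervalIntegral.integral_div,
        integral_rpow (Or.inl h1), integral_rpow (Or.inl h2),
        Real.zero_rpow (by linarith : (2*H-2+1:ℝ) ≠ 0), Real.zero_rpow (by linarith : (2*H-1+1:ℝ) ≠ 0),
        show (2*H-2+1:ℝ) = 2*H-1 by ring, show (2*H-1+1:ℝ) = 2*H by ring,
        sub_zero, sub_zero]
    have A : t ^ (2*H) = t * t ^ (2*H-1) := by
      nth_rewrite 1 [show (2*H:ℝ) = 1 + (2*H-1) by ring]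
      rw [Real.rpow_add ht, Real.rpow_one]
    rw [A]
    have hH0 : (H:ℝ) ≠ 0 := by linarith
    field_simp [ht1, hH0]
    ring
  have V2 : ∫ x in Set.Ioi t, f x = t^(2*H) * (1/(2-2*H) + 1/(3*(2*H-3))) := by
    rw [← setIntegral_congr_fun measurableSet_Ioi heq2,
        integral_sub (i1.const_mul (t^2)) (i2.const_mul (t^3/3)),
        integral_const_mul, integral_const_mul,
        integral_Ioi_rpow_of_lt h3 ht, integral_Ioi_rpow_of_lt h4 ht,
        show (2*H-3+1:ℝ) = 2*H-2 by ring, show (2*H-4+1:ℝ) = 2*H-3 by ring]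
    have B1 : t ^ (2*H-2) = t * t ^ (2*H-3) := by
      rw [show (2*H-2:ℝ) = 1 + (2*H-3) by ring, Real.rpow_add ht, Real.rpow_one]
    have B2 : t ^ (2*H) = t ^ (3:ℕ) * t ^ (2*H-3) := by
      rw [← Real.rpow_natCast t 3, ← Real.rpow_add ht]
      congr 1
      push_cast
      ring
    rw [B1, B2]
    have ht2b : (2 - 2*H:ℝ) ≠ 0 := by linarith
    have b2 : (1-H:ℝ) ≠ 0 := by linarith
    have b4 : (H-1:ℝ) ≠ 0 := by linarith
    have b3 : (H*2-3:ℝ) ≠ 0 := by linarith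
    have b5 : (H*2-2:ℝ) ≠ 0 := by linarith
    field_simp [ht2, ht3, ht2b]
    ring
  rw [V1, V2]
  ring

lemma stmt14_aux {H s : ℝ} (hH1 : 1/2 < H) (hH2 : H < 1) (hs : 0 < s)
    (t : ℝ) (ht : 0 ≤ t) :
    CH H * ∫ x in Set.Ioi (0 : ℝ), ∫ y in Set.Iic (0 : ℝ),
        (gker s t x y) ^ 2 * x ^ (2 * H - 4)
      = t ^ (2 * H) / 2 := by
  have hstep : ∀ x ∈ Set.Ioi (0:ℝ),
      (∫ y in Set.Iic (0:ℝ), (gker s t x y) ^ 2 * x ^ (2*H-4))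
        = ((min t x) ^ 2 * max t x - (min t x) ^ 3 / 3) * x ^ (2*H-4) := by
    intro x hx
    rw [MeasureTheory.integral_mul_const, inner_integral ht hx hs]
  rw [MeasureTheory.setIntegral_congr_fun measurableSet_Ioi hstep]
  rcases ht.eq_or_lt with rfl | h0
  · have hz : ∀ x ∈ Set.Ioi (0:ℝ),
        ((min (0:ℝ) x) ^ 2 * max (0:ℝ) x - (min (0:ℝ) x) ^ 3 / 3) * x ^ (2*H-4) = 0 := by
      intro x hx
      rw [min_eq_left (le_of_lt hx)]
      ring
    rw [MeasureTheory.setIntegral_congr_fun measurableSet_Ioi hz,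
        MeasureTheory.integral_zero, mul_zero,
        Real.zero_rpow (by linarith : (2*H:ℝ) ≠ 0)]
    norm_num
  · rw [outer_integral hH1 hH2 h0]
    have hkey : CH H * (1/(2*H-1) - 1/(6*H) + 1/(2-2*H) + 1/(3*(2*H-3))) = 1/2 := by
      have a1 : (2*H-1:ℝ) ≠ 0 := by linarith
      have a2 : (H:ℝ) ≠ 0 := by linarith
      have a3 : (2-2*H:ℝ) ≠ 0 := by linarith
      have a4 : (2*H-3:ℝ) ≠ 0 := by linarith
      have a5 : (1-H:ℝ) ≠ 0 := by linarith
      have b1 : (H*2-1:ℝ) ≠ 0 := by linarith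
      have b3 : (H*2-3:ℝ) ≠ 0 := by linarith
      unfold CH
      field_simp
      ring
    linear_combination t ^ (2*H) * hkey

/-- For `H ∈ (1/2,1)`, `s > 0` and `C_H = H(2H−1)(1−H)(3−2H)`, for
every `t ≥ 0`, `C_H ∫₀^∞∫_{−∞}^0 g_s(t,x,y)² x^{2H−4} dx dy = t^{2H}/2`. -/
theorem stmt14 {H s : ℝ} (hH : H ∈ Set.Ioo (1 / 2 : ℝ) 1) (hs : 0 < s)
    (t : ℝ) (ht : 0 ≤ t) :
    CH H * ∫ x in Set.Ioi (0 : ℝ), ∫ y in Set.Iic (0 : ℝ),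
        (gker s t x y) ^ 2 * x ^ (2 * H - 4)
      = t ^ (2 * H) / 2 :=
  stmt14_aux hH.1 hH.2 hs t ht
end
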